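/- arXiv:2212.12558 — 8 statements merged into one kernel-verified Lean document; each statement's English description precedes it below -/
import Mathlib

section
/- For all integers N > y > 0, the binomial probability mass at its mean satisfies C(N,y)·(y/N)^y·((N-y)/N)^(N-y) ≤ 1/2. -/
open Real

lemma aux_binom_half (a b : ℕ) (ha : 0 < a) (hb : 0 < b) :
    (((a + b).choose a : ℝ)) * ((a : ℝ) / ((a : ℝ) + b)) ^ a *
      ((b : ℝ) / ((a : ℝ) + b)) ^ b ≤ 1 / 2 := by
  set n : ℕ := a + b with hn
  have hnR : (0 : ℝ) < (n : ℝ) := by positivity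
  set P : ℝ := (a : ℝ) / ((a : ℝ) + b) with hP
  set Q : ℝ := (b : ℝ) / ((a : ℝ) + b) with hQ
  have hnab : ((n : ℝ)) = (a : ℝ) + b := by push_cast [hn]; ring
  have hP0 : 0 ≤ P := by positivity
  have hQ0 : 0 ≤ Q := by positivity
  have hden : ((a : ℝ) + b) ≠ 0 := by positivity
  have hPQ : P + Q = 1 := by rw [hP, hQ, ← add_div, div_self hden]
  set T : ℕ → ℝ := fun k => P ^ k * Q ^ (n - k) * ((n.choose k : ℝ)) with hT
  have hT0 : ∀ k, 0 ≤ T k := fun k =>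
    mul_nonneg (mul_nonneg (pow_nonneg hP0 _) (pow_nonneg hQ0 _)) (Nat.cast_nonneg _)
  have hsum : ∑ k ∈ Finset.range (n + 1), T k = 1 := by
    have := add_pow P Q n
    rw [hPQ, one_pow] at this
    exact this.symm
  have hss : ({a - 1, a, a + 1} : Finset ℕ) ⊆ Finset.range (n + 1) := by
    intro k hk
    simp only [Finset.mem_insert, Finset.mem_singleton, Finset.mem_range] at hk ⊢
    omega
  have h3 : T (a - 1) + T a + T (a + 1) ≤ 1 := by
    have hle := Finset.sum_le_sum_of_subset_of_nonneg hss (fun k _ _ => hT0 k)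
    rw [hsum] at hle
    have heq : ∑ k ∈ ({a - 1, a, a + 1} : Finset ℕ), T k
        = T (a - 1) + T a + T (a + 1) := by
      rw [Finset.sum_insert (by simp only [Finset.mem_insert, Finset.mem_singleton]; omega), Finset.sum_insert (by simp only [Finset.mem_singleton]; omega),
        Finset.sum_singleton]
      ring
    linarith [heq ▸ hle]
  have hPQrel : (b : ℝ) * P = (a : ℝ) * Q := by rw [hP, hQ]; ring
  -- key1 : (a+1) * T (a+1) = a * T a
  have hchoose1 : ((n.choose (a + 1)) : ℝ) * ((a : ℝ) + 1) = (n.choose a : ℝ) * b := by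
    have h := Nat.choose_succ_right_eq n a
    have hna : n - a = b := by omega
    rw [hna] at h
    exact_mod_cast congrArg (Nat.cast : ℕ → ℝ) h
  have hexp1 : n - (a + 1) = b - 1 := by omega
  have hQb : Q ^ b = Q ^ (b - 1) * Q := by
    rw [← pow_succ]; congr 1; omega
  have key1 : ((a : ℝ) + 1) * T (a + 1) = (a : ℝ) * T a := by
    simp only [hT, hexp1]
    have hna : n - a = b := by omega
    rw [hna, hQb, pow_succ]
    linear_combination (P ^ a * Q ^ (b - 1) * P) * hchoose1 +
      (P ^ a * Q ^ (b - 1) * (n.choose a : ℝ)) * hPQrel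
  -- key2 : (b+1) * T (a-1) = b * T a
  have hchoose2 : ((n.choose a) : ℝ) * (a : ℝ) = (n.choose (a - 1) : ℝ) * ((b : ℝ) + 1) := by
    have h := Nat.choose_succ_right_eq n (a - 1)
    have h1 : a - 1 + 1 = a := by omega
    have h2 : n - (a - 1) = b + 1 := by omega
    rw [h1, h2] at h
    exact_mod_cast congrArg (Nat.cast : ℕ → ℝ) h
  have hexp2 : n - (a - 1) = b + 1 := by omega
  have hPa : P ^ a = P ^ (a - 1) * P := by
    rw [← pow_succ]; congr 1; omega
  have key2 : ((b : ℝ) + 1) * T (a - 1) = (b : ℝ) * T a := by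
    simp only [hT, hexp2]
    have hna : n - a = b := by omega
    rw [hna, hPa, pow_succ]
    linear_combination (P ^ (a - 1) * Q ^ b * Q) * hchoose2.symm -
      (P ^ (a - 1) * Q ^ b * (n.choose a : ℝ)) * hPQrel
  have haR : (1 : ℝ) ≤ (a : ℝ) := by exact_mod_cast ha
  have hbR : (1 : ℝ) ≤ (b : ℝ) := by exact_mod_cast hb
  have hTa := hT0 a
  have hTa1 := hT0 (a + 1)
  have hTa2 := hT0 (a - 1)
  have half1 : T a ≤ 2 * T (a + 1) := by nlinarith
  have half2 : T a ≤ 2 * T (a - 1) := by nlinarith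
  have hfinal : T a ≤ 1 / 2 := by linarith
  have hTaeq : T a = ((n.choose a : ℝ)) * P ^ a * Q ^ b := by
    simp only [hT]
    have hna : n - a = b := by omega
    rw [hna]; ring
  rw [hTaeq] at hfinal
  exact hfinal

theorem binomial_pmf_at_mean_le_half (N y : ℕ) (hy : 0 < y) (hyN : y < N) :
    (N.choose y : ℝ) * ((y : ℝ) / N) ^ y * (((N : ℝ) - y) / N) ^ (N - y) ≤ 1 / 2 := by
  have hN : N = y + (N - y) := by omega
  have h := aux_binom_half y (N - y) hy (by omega)
  have h1 : ((N : ℝ)) = (y : ℝ) + ((N - y : ℕ) : ℝ) := by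
    push_cast [Nat.cast_sub hyN.le]; ring
  have h2 : ((N : ℝ)) - (y : ℝ) = ((N - y : ℕ) : ℝ) := by
    push_cast [Nat.cast_sub hyN.le]; ring
  rw [h2, h1, show N.choose y = (y + (N - y)).choose y from by rw [← hN]]
  exact h
end

section
/- For integers 0 < y < N, the binomial coefficient satisfies C(N,y) ≤ sqrt(N/(2π·y·(N-y))) · N^N/(y^y·(N-y)^(N-y)). -/
open Real
open scoped Nat

lemma sqrt_pi_le_stirlingSeq (n : ℕ) (hn : n ≠ 0) :
    Real.sqrt π ≤ Stirling.stirlingSeq n := by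
  obtain ⟨m, rfl⟩ := Nat.exists_eq_succ_of_ne_zero hn
  refine le_of_tendsto Stirling.tendsto_stirlingSeq_sqrt_pi ?_
  filter_upwards [Filter.eventually_ge_atTop (m + 1)] with k hk
  obtain ⟨j, rfl⟩ := Nat.exists_eq_succ_of_ne_zero (by omega : k ≠ 0)
  simpa using Stirling.stirlingSeq'_antitone (show m ≤ j by omega)

lemma factorial_eq_stirling (n : ℕ) (hn : 0 < n) :
    (n ! : ℝ) = Stirling.stirlingSeq n *
      (Real.sqrt (2 * n) * ((n : ℝ) / Real.exp 1) ^ n) := by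
  have h : Real.sqrt (2 * n) * ((n : ℝ) / Real.exp 1) ^ n ≠ 0 := by
    have : (0 : ℝ) < n := by exact_mod_cast hn
    positivity
  rw [Stirling.stirlingSeq, div_mul_cancel₀ _ h]

theorem choose_le_stirling_bound (N y : ℕ) (hy : 0 < y) (hyN : y < N) :
    (N.choose y : ℝ) ≤
      Real.sqrt ((N : ℝ) / (2 * Real.pi * y * ((N : ℝ) - y))) *
        ((N : ℝ) ^ N / ((y : ℝ) ^ y * ((N : ℝ) - y) ^ (N - y))) := by
  set b := N - y with hbdef
  have hb : 0 < b := by omega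
  have hNyb : N = y + b := by omega
  have hcast : (N : ℝ) - y = (b : ℝ) := by
    rw [hbdef]; push_cast [Nat.cast_sub hyN.le]; ring
  rw [hcast]
  have hNpos : (0 : ℝ) < N := by exact_mod_cast (by omega : 0 < N)
  have hypos : (0 : ℝ) < y := by exact_mod_cast hy
  have hbpos : (0 : ℝ) < b := by exact_mod_cast hb
  set sN := Stirling.stirlingSeq N with hsN
  set sy := Stirling.stirlingSeq y with hsy
  set sb := Stirling.stirlingSeq b with hsb
  have hspos : ∀ n : ℕ, 0 < n → 0 < Stirling.stirlingSeq n := by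
    intro n hn
    obtain ⟨m, rfl⟩ := Nat.exists_eq_succ_of_ne_zero hn.ne'
    exact Stirling.stirlingSeq'_pos m
  have hsNpos : 0 < sN := hspos N (by omega)
  have hsypos : 0 < sy := hspos y hy
  have hsbpos : 0 < sb := hspos b hb
  -- the key identity for the binomial coefficient
  have hsqrt : Real.sqrt ((N : ℝ) / (2 * y * b)) =
      Real.sqrt (2 * N) / (Real.sqrt (2 * y) * Real.sqrt (2 * b)) := by
    rw [← Real.sqrt_mul (by positivity), ← Real.sqrt_div (by positivity)]
    congr 1
    field_simp
  have key : (N.choose y : ℝ) = sN / (sy * sb) *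
      (Real.sqrt ((N : ℝ) / (2 * y * b)) * ((N : ℝ) ^ N / ((y : ℝ) ^ y * (b : ℝ) ^ b))) := by
    rw [Nat.cast_choose ℝ hyN.le, ← hbdef,
      factorial_eq_stirling N (by omega), factorial_eq_stirling y hy,
      factorial_eq_stirling b hb, hsqrt, ← hsN, ← hsy, ← hsb]
    have hexp : Real.exp 1 ^ N = Real.exp 1 ^ y * Real.exp 1 ^ b := by
      rw [hNyb, pow_add]
    have h2N : (0:ℝ) < Real.sqrt (2 * N) := Real.sqrt_pos.mpr (by positivity)
    have h2y : (0:ℝ) < Real.sqrt (2 * y) := Real.sqrt_pos.mpr (by positivity)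
    have h2b : (0:ℝ) < Real.sqrt (2 * b) := Real.sqrt_pos.mpr (by positivity)
    rw [div_pow, div_pow, div_pow, hexp]
    field_simp
  rw [key]
  -- split the sqrt on the right
  have hsplit : Real.sqrt ((N : ℝ) / (2 * Real.pi * y * (b : ℝ))) =
      Real.sqrt (1 / π) * Real.sqrt ((N : ℝ) / (2 * y * b)) := by
    rw [← Real.sqrt_mul (by positivity)]
    congr 1
    rw [div_mul_div_comm, one_mul]
    congr 1
    ring
  rw [hsplit]
  have hS : 0 < Real.sqrt ((N : ℝ) / (2 * y * b)) := Real.sqrt_pos.mpr (by positivity)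
  have hP : 0 < (N : ℝ) ^ N / ((y : ℝ) ^ y * (b : ℝ) ^ b) := by positivity
  rw [mul_assoc (Real.sqrt (1 / π))]
  refine mul_le_mul_of_nonneg_right ?_ (mul_nonneg hS.le hP.le)
  -- sN / (sy * sb) ≤ √(1/π)
  have hπs : (0 : ℝ) < Real.sqrt π := Real.sqrt_pos.mpr Real.pi_pos
  have hinv : Real.sqrt (1 / π) = 1 / Real.sqrt π := by
    rw [one_div, one_div, Real.sqrt_inv]
  rw [hinv, div_le_div_iff₀ (by positivity) hπs]
  have h1 : sN ≤ sy := by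
    obtain ⟨m, hm⟩ := Nat.exists_eq_succ_of_ne_zero hy.ne'
    obtain ⟨k, hk⟩ := Nat.exists_eq_succ_of_ne_zero (show N ≠ 0 by omega)
    rw [hsN, hsy, hm, hk]
    simpa using Stirling.stirlingSeq'_antitone (show m ≤ k by omega)
  have h2 : Real.sqrt π ≤ sb := sqrt_pi_le_stirlingSeq b hb.ne'
  nlinarith [mul_le_mul h1 h2 hπs.le hsypos.le]
end

section
/- The sequence b_n = (n-2)^(n-1) · n^(-n) · (3n - 2) is monotonically increasing for integers n ≥ 3, and b_3 ≥ 1/4; consequently (n-2)^(n-1) · (3n-2) / n^n ≥ 1/4 for all n ≥ 3. -/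
lemma key_pow (d : ℕ) (a : ℝ) (ha : 2 ≤ a) :
    2 * (a - 2) ^ d * a ^ 2 ≤ (2 * a ^ 2 - 4 * d * a + 4 * d * (d - 1)) * a ^ d := by
  induction d with
  | zero => norm_num
  | succ d ih =>
    have hb : (0:ℝ) ≤ a - 2 := by linarith
    have hap : (0:ℝ) ≤ a ^ d := pow_nonneg (by linarith) d
    have hd : (0:ℝ) ≤ (d:ℝ) * ((d:ℝ) - 1) := by
      rcases Nat.eq_zero_or_pos d with h | h
      · simp [h]
      · have : (1:ℝ) ≤ (d:ℝ) := by exact_mod_cast h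
        nlinarith
    have h2 := mul_le_mul_of_nonneg_right ih hb
    have h3 : (2 * a ^ 2 - 4 * d * a + 4 * d * (d - 1)) * (a - 2) ≤
        (2 * a ^ 2 - 4 * (d + 1) * a + 4 * (d + 1) * d) * a := by nlinarith
    have h4 := mul_le_mul_of_nonneg_right h3 hap
    push_cast
    calc 2 * (a - 2) ^ (d+1) * a ^ 2 = 2 * (a - 2) ^ d * a ^ 2 * (a - 2) := by ring
      _ ≤ (2 * a ^ 2 - 4 * d * a + 4 * d * ((d:ℝ) - 1)) * a ^ d * (a - 2) := h2
      _ = (2 * a ^ 2 - 4 * d * a + 4 * d * ((d:ℝ) - 1)) * (a - 2) * a ^ d := by ring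
      _ ≤ (2 * a ^ 2 - 4 * ((d:ℝ) + 1) * a + 4 * ((d:ℝ) + 1) * d) * a * a ^ d := h4
      _ = (2 * a ^ 2 - 4 * ((d:ℝ) + 1) * a + 4 * ((d:ℝ) + 1) * ((d:ℝ) + 1 - 1)) * a ^ (d+1) := by ring

lemma step_ineq (n : ℕ) (hn : 3 ≤ n) :
    ((n : ℝ) - 2) ^ (n - 1) * (3 * (n : ℝ) - 2) / (n : ℝ) ^ n ≤
      (((n+1) : ℝ) - 2) ^ ((n+1) - 1) * (3 * ((n+1) : ℝ) - 2) / ((n+1) : ℝ) ^ (n+1) := by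
  obtain ⟨d, rfl⟩ : ∃ d, n = d + 1 := ⟨n - 1, by omega⟩
  set x : ℝ := ((d+1 : ℕ) : ℝ) with hxdef
  have hx : (3:ℝ) ≤ x := by rw [hxdef]; exact_mod_cast hn
  have hdx : (d:ℝ) = x - 2 + 1 := by push_cast [hxdef]; ring
  have hxp : (0:ℝ) < x := by linarith
  have hx1p : (0:ℝ) < x + 1 := by linarith
  have hpow1 : (0:ℝ) < x ^ (d+1) := pow_pos hxp _
  have hpow2 : (0:ℝ) < (x+1) ^ (d+2) := pow_pos hx1p _
  have hexp : (d + 1) - 1 = d := rfl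
  have hexp2 : ((d+1) + 1) - 1 = d + 1 := rfl
  rw [hexp, hexp2]
  rw [div_le_div_iff₀ hpow1 (pow_pos hx1p _)]
  -- goal: (x-2)^d * (3x-2) * (x+1)^(d+2) ≤ (x+1-2)^(d+1) * (3(x+1)-2) * x^(d+1)
  set a : ℝ := x^2 - x with hadef
  have ha : (2:ℝ) ≤ a := by nlinarith
  have ha0 : (0:ℝ) < a := by linarith
  have key := key_pow d a ha
  have hfac : (a - 2) = (x - 2) * (x + 1) := by rw [hadef]; ring
  have hQ : (2 * a ^ 2 - 4 * d * a + 4 * d * ((d:ℝ) - 1)) * ((x+1)^2 * (3*x-2)) ≤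
      2 * a ^ 3 * (3 * x + 1) := by
    rw [hdx, hadef]; nlinarith [sq_nonneg x, sq_nonneg (x-3), sq_nonneg (x*(x-3)), sq_nonneg (x^2*(x-3))]
  have hadp : (0:ℝ) ≤ a ^ d := pow_nonneg (le_of_lt ha0) d
  have hwp : (0:ℝ) ≤ (x+1)^2 * (3*x-2) := mul_nonneg (sq_nonneg _) (by linarith)
  have h5 := mul_le_mul_of_nonneg_right key hwp
  have h6 := mul_le_mul_of_nonneg_right hQ hadp
  -- combine: 2*(a-2)^d*a^2*((x+1)^2*(3x-2)) ≤ Q*a^d*w ≤ 2*a^3*(3x+1)*a^d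
  have h7 : 2 * (a-2)^d * a^2 * ((x+1)^2 * (3*x-2)) ≤ 2 * a^3 * (3*x+1) * a^d := by
    calc 2 * (a-2)^d * a^2 * ((x+1)^2 * (3*x-2))
        ≤ (2 * a ^ 2 - 4 * d * a + 4 * d * ((d:ℝ) - 1)) * a^d * ((x+1)^2 * (3*x-2)) := h5
      _ = (2 * a ^ 2 - 4 * d * a + 4 * d * ((d:ℝ) - 1)) * ((x+1)^2 * (3*x-2)) * a^d := by ring
      _ ≤ 2 * a ^ 3 * (3 * x + 1) * a^d := h6
  -- now rewrite both sides of the goal in terms of h7, cancelling 2*a^2 > 0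
  have hL : (x - 2) ^ d * (3 * x - 2) * (x + 1) ^ (d + 2)
      = (a-2)^d * ((x+1)^2 * (3*x-2)) := by
    rw [hfac, mul_pow, pow_add]; ring
  have hpw : (x-1)^(d+1) * x^(d+1) = a * a^d := by
    rw [← mul_pow, show (x-1)*x = a from by rw [hadef]; ring, pow_succ]; ring
  have hR : (x + 1 - 2) ^ (d + 1) * (3 * (x + 1) - 2) * x ^ (d + 1)
      = a * a^d * (3*x+1) := by
    have h12 : x + 1 - 2 = x - 1 := by ring
    rw [h12]
    linear_combination (3*x+1) * hpw
  rw [hL, hR]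
  have h2a2 : (0:ℝ) < 2 * a^2 := by positivity
  rw [← mul_le_mul_iff_of_pos_left h2a2]
  calc 2*a^2 * ((a-2)^d * ((x+1)^2 * (3*x-2))) = 2 * (a-2)^d * a^2 * ((x+1)^2 * (3*x-2)) := by ring
    _ ≤ 2 * a^3 * (3*x+1) * a^d := h7
    _ = 2*a^2 * (a * a^d * (3*x+1)) := by ring

theorem b_seq_monotone_and_ge_quarter :
    (∀ m n : ℕ, 3 ≤ m → m ≤ n →
      ((m : ℝ) - 2) ^ (m - 1) * (3 * (m : ℝ) - 2) / (m : ℝ) ^ m ≤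
        ((n : ℝ) - 2) ^ (n - 1) * (3 * (n : ℝ) - 2) / (n : ℝ) ^ n) ∧
    (1 / 4 : ℝ) ≤ ((3 : ℝ) - 2) ^ (3 - 1) * (3 * (3 : ℝ) - 2) / (3 : ℝ) ^ 3 ∧
    (∀ n : ℕ, 3 ≤ n →
      (1 / 4 : ℝ) ≤ ((n : ℝ) - 2) ^ (n - 1) * (3 * (n : ℝ) - 2) / (n : ℝ) ^ n) := by
  have mono : ∀ m n : ℕ, 3 ≤ m → m ≤ n →
      ((m : ℝ) - 2) ^ (m - 1) * (3 * (m : ℝ) - 2) / (m : ℝ) ^ m ≤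
        ((n : ℝ) - 2) ^ (n - 1) * (3 * (n : ℝ) - 2) / (n : ℝ) ^ n := by
    intro m n hm hmn
    induction n, hmn using Nat.le_induction with
    | base => exact le_refl _
    | succ k hk ih =>
      have hs := step_ineq k (le_trans hm hk)
      push_cast at hs ⊢
      exact le_trans ih hs
  refine ⟨mono, by norm_num, fun n hn => ?_⟩
  have h3 := mono 3 n (le_refl _) hn
  have : (1/4 : ℝ) ≤ (((3:ℕ) : ℝ) - 2) ^ (3 - 1) * (3 * ((3:ℕ) : ℝ) - 2) / ((3:ℕ) : ℝ) ^ 3 := by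
    norm_num
  linarith
end

section
/- For every real x with -1 < x ≤ 0, one has log(1+x) ≤ 3x(2+x)/(6 + 6x + x²). -/
theorem log_one_add_le_pade2 (x : ℝ) (hx1 : -1 < x) (hx0 : x ≤ 0) :
    Real.log (1 + x) ≤ 3 * x * (2 + x) / (6 + 6 * x + x ^ 2) := by
  rcases eq_or_lt_of_le hx0 with h0 | hxneg
  · subst h0; simp
  · set g : ℝ → ℝ := fun y => Real.log (1 + y) - 3 * y * (2 + y) / (6 + 6 * y + y ^ 2)
      with hg
    set G : ℝ → ℝ := fun y => y ^ 4 / ((1 + y) * (6 + 6 * y + y ^ 2) ^ 2) with hG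
    have key : ∀ y : ℝ, -1 < y → HasDerivAt g (G y) y := by
      intro y hy
      have hy1 : (0 : ℝ) < 1 + y := by linarith
      have hD : (0 : ℝ) < 6 + 6 * y + y ^ 2 := by nlinarith
      have h1 : HasDerivAt (fun y : ℝ => 1 + y) 1 y := (hasDerivAt_id y).const_add 1
      have hlog : HasDerivAt (fun y : ℝ => Real.log (1 + y)) (1 / (1 + y)) y := by
        simpa using h1.log (ne_of_gt hy1)
      have hN : HasDerivAt (fun y : ℝ => 3 * y * (2 + y)) (6 + 6 * y) y := by
        have := ((hasDerivAt_id y).const_mul 3).mul ((hasDerivAt_id y).const_add 2)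
        simp only [id] at this
        exact this.congr_deriv (by ring)
      have hDd : HasDerivAt (fun y : ℝ => 6 + 6 * y + y ^ 2) (6 + 2 * y) y := by
        have := (((hasDerivAt_id y).const_mul 6).const_add 6).add (hasDerivAt_pow 2 y)
        exact this.congr_deriv (by ring)
      have hdiv := hN.div hDd (ne_of_gt hD)
      have := hlog.sub hdiv
      refine this.congr_deriv ?_; symm
      have h1' : (1 + y) ≠ 0 := ne_of_gt hy1
      have hD2 : ((6 + 6 * y + y ^ 2) ^ 2) ≠ 0 := pow_ne_zero 2 (ne_of_gt hD)
      rw [div_sub_div _ _ h1' hD2, div_eq_div_iff (by positivity) (by positivity)]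
      ring
    have hcont : ContinuousOn g (Set.Icc x 0) := by
      intro y hy
      exact (key y (lt_of_lt_of_le hx1 hy.1)).continuousAt.continuousWithinAt
    have hderiv : ∀ y ∈ Set.Ioo x 0, HasDerivAt g (G y) y := fun y hy =>
      key y (lt_trans hx1 hy.1)
    obtain ⟨c, hc, hceq⟩ := exists_hasDerivAt_eq_slope g G hxneg hcont hderiv
    have hc1 : -1 < c := lt_trans hx1 hc.1
    have hGc : 0 ≤ G c := by
      have hy1 : (0 : ℝ) < 1 + c := by linarith
      have hD : (0 : ℝ) < 6 + 6 * c + c ^ 2 := by nlinarith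
      positivity
    have hg0 : g 0 = 0 := by simp [hg]
    have : 0 ≤ (g 0 - g x) / (0 - x) := hceq ▸ hGc
    have hx : 0 < 0 - x := by linarith
    have := (div_nonneg_iff.mp this)
    have hgx : g x ≤ 0 := by
      rcases this with ⟨h, _⟩ | ⟨_, h⟩
      · linarith [hg0 ▸ h]
      · linarith
    have := hgx
    simp only [hg] at this
    linarith
end

section
/- For every positive integer n, the harmonic number H(n) = Σ_{k=1}^n 1/k satisfies log(n) + γ + 1/(2n+1) ≤ H(n) ≤ log(n) + γ + 1/(2n-1), where γ is the Euler–Mascheroni constant. -/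
open Filter Topology Set

lemma log_strict_aux {f : ℝ → ℝ} (hc : ContinuousOn f (Ici 1))
    (hd : ∀ x ∈ Ioi (1:ℝ), 0 < deriv f x) {u : ℝ} (hu : 1 < u) : f 1 < f u := by
  have key : StrictMonoOn f (Ici 1) := by
    apply strictMonoOn_of_deriv_pos (convex_Ici 1) hc
    rwa [interior_Ici]
  exact key self_mem_Ici (le_of_lt hu) hu

-- trapezoid: 2 log u < u - 1/u for u > 1
lemma aux_log_lt_trap {u : ℝ} (hu : 1 < u) : 2 * Real.log u < u - u⁻¹ := by
  have h := log_strict_aux (f := fun x : ℝ => x - x⁻¹ - 2 * Real.log x) ?_ ?_ hu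
  · simpa using h
  · refine ((continuousOn_id.sub (continuousOn_id.inv₀ ?_)).sub
      (continuousOn_const.mul (Real.continuousOn_log.mono ?_)))
    · intro x hx; have : (1:ℝ) ≤ x := hx; positivity
    · intro x hx; have : (1:ℝ) ≤ x := hx; simp only [mem_compl_iff, mem_singleton_iff]; positivity
  · intro x hx
    have h1 : (1:ℝ) < x := hx
    have hx0 : (0:ℝ) < x := lt_trans one_pos h1
    have hd : HasDerivAt (fun x : ℝ => x - x⁻¹ - 2 * Real.log x)
        (1 - (-(x^2)⁻¹) - 2 * x⁻¹) x :=
      ((hasDerivAt_id x).sub (hasDerivAt_inv hx0.ne')).sub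
        ((Real.hasDerivAt_log hx0.ne').const_mul 2)
    have heq : (1 : ℝ) - (-(x^2)⁻¹) - 2 * x⁻¹ = (1 - x⁻¹)^2 := by
      field_simp; ring
    rw [hd.deriv, heq]
    have hinv : (0:ℝ) < 1 - x⁻¹ := by
      have : x⁻¹ < 1 := inv_lt_one_of_one_lt₀ h1
      linarith
    positivity

-- midpoint: 2(u-1)/(u+1) < log u for u > 1
lemma aux_log_gt_mid {u : ℝ} (hu : 1 < u) : 2 * (u - 1) / (u + 1) < Real.log u := by
  have h := log_strict_aux (f := fun x : ℝ => Real.log x - 2 * (x - 1) / (x + 1)) ?_ ?_ hu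
  · simp at h; linarith
  · refine (Real.continuousOn_log.mono ?_).sub (ContinuousOn.div (by fun_prop) (by fun_prop) ?_)
    · intro x hx; have : (1:ℝ) ≤ x := hx; simp only [mem_compl_iff, mem_singleton_iff]; positivity
    · intro x hx; have : (1:ℝ) ≤ x := hx; positivity
  · intro x hx
    have h1 : (1:ℝ) < x := hx
    have hx0 : (0:ℝ) < x := lt_trans one_pos h1
    have hx1 : x + 1 ≠ 0 := by positivity
    have hd : HasDerivAt (fun x : ℝ => Real.log x - 2 * (x - 1) / (x + 1))
        (x⁻¹ - (2 * (x + 1) - 2 * (x - 1) * 1) / (x + 1)^2) x := by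
      refine (Real.hasDerivAt_log hx0.ne').sub ?_
      have h2 : HasDerivAt (fun x : ℝ => 2 * (x - 1)) 2 x := by
        simpa using (((hasDerivAt_id x).sub_const 1).const_mul 2)
      have h3 : HasDerivAt (fun x : ℝ => x + 1) 1 x := (hasDerivAt_id x).add_const 1
      simpa using h2.fun_div h3 hx1
    rw [hd.deriv]
    rw [show x⁻¹ - (2 * (x + 1) - 2 * (x - 1) * 1) / (x + 1)^2 = (x-1)^2 / (x * (x+1)^2) by
      field_simp; ring]
    have : (0:ℝ) < x - 1 := by linarith
    positivity

theorem harmonic_log_gamma_bounds (n : ℕ) (hn : 0 < n) :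
    Real.log n + Real.eulerMascheroniConstant + 1 / (2 * (n : ℝ) + 1) ≤ (harmonic n : ℝ) ∧
    (harmonic n : ℝ) ≤ Real.log n + Real.eulerMascheroniConstant + 1 / (2 * (n : ℝ) - 1) := by
  set γ := Real.eulerMascheroniConstant
  -- two sequences
  set f : ℕ → ℝ := fun m => (harmonic m : ℝ) - Real.log m - 1 / (2 * m + 1) with hf
  set g : ℕ → ℝ := fun m => (harmonic m : ℝ) - Real.log m - 1 / (2 * m) with hg
  have hstep : ∀ m : ℕ, 1 ≤ m → f (m + 1) ≤ f m ∧ g m ≤ g (m + 1) := by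
    intro m hm
    have hm0 : (0:ℝ) < m := by exact_mod_cast hm
    have hu : 1 < ((m:ℝ) + 1) / m := by
      rw [lt_div_iff₀ hm0]; linarith
    have hlog : Real.log (((m:ℝ) + 1) / m) = Real.log (m + 1) - Real.log m :=
      Real.log_div (by positivity) hm0.ne'
    have hH : (harmonic (m + 1) : ℝ) = harmonic m + 1 / (m + 1) := by
      rw [harmonic_succ]; push_cast; ring
    have htrap := aux_log_lt_trap hu
    have hmid := aux_log_gt_mid hu
    rw [hlog] at htrap hmid
    have e1 : ((m:ℝ) + 1) / m - (((m:ℝ) + 1) / m)⁻¹ = (2 * m + 1) / (m * (m + 1)) := by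
      rw [inv_div]; field_simp; ring
    have e2 : 2 * (((m:ℝ) + 1) / m - 1) / (((m:ℝ) + 1) / m + 1) = 2 / (2 * m + 1) := by
      field_simp; ring
    rw [e1] at htrap
    rw [e2] at hmid
    constructor
    · simp only [hf]
      push_cast
      rw [hH]
      have e : (2:ℝ) / (2 * m + 1) - (1 / ((m:ℝ) + 1) + 1 / (2 * m + 1) - 1 / (2 * ((m:ℝ) + 1) + 1))
          = 1 / (((m:ℝ) + 1) * (2 * m + 1) * (2 * m + 3)) := by
        field_simp
        ring
      have epos : (0:ℝ) < 1 / (((m:ℝ) + 1) * (2 * m + 1) * (2 * m + 3)) := by positivity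
      linarith
    · simp only [hg]
      push_cast
      rw [hH]
      have e : 2 * ((1:ℝ) / ((m:ℝ) + 1) + 1 / (2 * m) - 1 / (2 * ((m:ℝ) + 1)))
          = (2 * (m:ℝ) + 1) / (m * (m + 1)) := by
        field_simp
        ring
      linarith
  have hfmono : ∀ m k : ℕ, 1 ≤ m → m ≤ k → f k ≤ f m := by
    intro m k hm hmk
    induction k, hmk using Nat.le_induction with
    | base => exact le_refl _
    | succ k hk ih => exact le_trans (hstep k (le_trans hm hk)).1 ih
  have hgmono : ∀ m k : ℕ, 1 ≤ m → m ≤ k → g m ≤ g k := by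
    intro m k hm hmk
    induction k, hmk using Nat.le_induction with
    | base => exact le_refl _
    | succ k hk ih => exact le_trans ih (hstep k (le_trans hm hk)).2
  have h1 := Real.tendsto_harmonic_sub_log
  have hb : Tendsto (fun m : ℕ => 2 * (m:ℝ)) atTop atTop :=
    (tendsto_natCast_atTop_atTop).const_mul_atTop two_pos
  have hftend : Tendsto f atTop (𝓝 γ) := by
    have h2 : Tendsto (fun m : ℕ => (2 * (m:ℝ) + 1)⁻¹) atTop (𝓝 0) :=
      tendsto_inv_atTop_zero.comp (tendsto_atTop_add_const_right _ 1 hb)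
    have h3 := h1.sub h2
    rw [sub_zero] at h3
    exact h3.congr fun m => by simp [hf, one_div]
  have hgtend : Tendsto g atTop (𝓝 γ) := by
    have h2 : Tendsto (fun m : ℕ => (2 * (m:ℝ))⁻¹) atTop (𝓝 0) :=
      tendsto_inv_atTop_zero.comp hb
    have h3 := h1.sub h2
    rw [sub_zero] at h3
    exact h3.congr fun m => by simp [hg, one_div]
  have hfn : γ ≤ f n := by
    refine le_of_tendsto hftend ?_
    filter_upwards [eventually_ge_atTop n] with k hk
    exact hfmono n k hn hk
  have hgn : g n ≤ γ := by
    refine ge_of_tendsto hgtend ?_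
    filter_upwards [eventually_ge_atTop n] with k hk
    exact hgmono n k hn hk
  have hn1 : (1:ℝ) ≤ n := by exact_mod_cast hn
  simp only [hf] at hfn
  simp only [hg] at hgn
  constructor
  · linarith
  · have h2 : 1 / (2 * (n:ℝ)) ≤ 1 / (2 * (n:ℝ) - 1) := by
      apply one_div_le_one_div_of_le
      · linarith
      · linarith
    linarith
end

section
/- For each fixed integer d with 1 ≤ d ≤ n-1, the function n ↦ C(n,d)·(d/n)^d·((n-d)/n)^(n-d) is nonincreasing in n (for integer n > d), i.e., the binomial probability mass at the integer mean d of Binomial(n, d/n) does not increase with n when d is fixed. -/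
-- key: ((n+1)/n)^n ≤ ((n+2)/(n+1))^(n+1), cleared form
lemma key_step (n : ℕ) (hn : 1 ≤ n) :
    ((n : ℝ) + 1) ^ (2 * n + 1) ≤ (n : ℝ) ^ n * ((n : ℝ) + 2) ^ (n + 1) := by
  have hn0 : (0 : ℝ) < n := by exact_mod_cast hn
  have hb := one_add_mul_le_pow (a := -(1 / ((n : ℝ) + 1) ^ 2)) (by
    have h : (1:ℝ) ≤ ((n : ℝ) + 1) ^ 2 := by nlinarith
    have h2 : (1 / ((n : ℝ) + 1) ^ 2 : ℝ) ≤ 1 := by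
      rw [div_le_one (by positivity)]; exact h
    linarith) (n + 1)
  have h1 : (1 : ℝ) + -(1 / ((n : ℝ) + 1) ^ 2) = (n * (n + 2)) / ((n + 1) ^ 2) := by
    field_simp; ring
  have h2 : (1 : ℝ) + ((n : ℕ) + 1 : ℕ) * -(1 / ((n : ℝ) + 1) ^ 2) = n / (n + 1) := by
    push_cast
    field_simp
    ring
  rw [h2, h1, div_pow] at hb
  have hpos : (0 : ℝ) < (((n : ℝ) + 1) ^ 2) ^ (n + 1) := by positivity
  rw [div_le_div_iff₀ (by positivity) hpos] at hb
  -- hb : n * ((n+1)^2)^(n+1) ≤ (n*(n+2))^(n+1) * (n+1)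
  have e1 : (((n : ℝ) + 1) ^ 2) ^ (n + 1) = ((n : ℝ) + 1) ^ (2 * n + 1) * ((n : ℝ) + 1) := by
    rw [← pow_mul, show 2*(n+1) = (2*n+1)+1 from by ring, pow_succ]
  have e2 : ((n : ℝ) * (n + 2)) ^ (n + 1) = (n : ℝ) ^ n * (n : ℝ) * ((n : ℝ) + 2) ^ (n + 1) := by
    rw [mul_pow]; rw [pow_succ ((n:ℝ))]
  rw [e1, e2] at hb
  have := mul_le_mul_of_nonneg_left hb (le_of_lt hn0)
  have h3 : (0 : ℝ) < (n : ℝ) * ((n : ℝ) + 1) := by positivity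
  nlinarith [hb, hn0]

-- aux : for k ≤ n, (k+1)^k * n^n ≤ k^k * (n+1)^n
lemma aux_pow (k : ℕ) : ∀ n : ℕ, k ≤ n →
    ((k : ℝ) + 1) ^ k * (n : ℝ) ^ n ≤ (k : ℝ) ^ k * ((n : ℝ) + 1) ^ n := by
  intro n hn
  induction n, hn using Nat.le_induction with
  | base => ring_nf; exact le_refl _
  | succ n hkn ih =>
    rcases Nat.eq_zero_or_pos n with h0 | h1
    · subst h0
      interval_cases k
      norm_num
    · have key := key_step n h1
      have hnpos : (0 : ℝ) < (n : ℝ) ^ n := by positivity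
      have hk0 : (0 : ℝ) ≤ (k : ℝ) ^ k := by positivity
      rw [← mul_le_mul_iff_of_pos_right hnpos]
      push_cast
      calc ((k : ℝ) + 1) ^ k * ((n : ℝ) + 1) ^ (n + 1) * (n : ℝ) ^ n
          = ((k : ℝ) + 1) ^ k * (n : ℝ) ^ n * ((n : ℝ) + 1) ^ (n + 1) := by ring
        _ ≤ (k : ℝ) ^ k * ((n : ℝ) + 1) ^ n * ((n : ℝ) + 1) ^ (n + 1) := by
            apply mul_le_mul_of_nonneg_right ih (by positivity)
        _ = (k : ℝ) ^ k * ((n : ℝ) + 1) ^ (2 * n + 1) := by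
            rw [mul_assoc, ← pow_add]; ring_nf
        _ ≤ (k : ℝ) ^ k * ((n : ℝ) ^ n * ((n : ℝ) + 2) ^ (n + 1)) := by
            exact mul_le_mul_of_nonneg_left key hk0
        _ = (k : ℝ) ^ k * ((n : ℝ) + 1 + 1) ^ (n + 1) * (n : ℝ) ^ n := by ring

lemma cleared (d k : ℕ) (hd : 1 ≤ d) (hk : 1 ≤ k) :
    ((d+k+1).choose d : ℝ) * (d:ℝ)^d * ((k:ℝ)+1)^(k+1) * (((d:ℝ)+k)^d * ((d:ℝ)+k)^k) ≤
      ((d+k).choose d : ℝ) * (d:ℝ)^d * (k:ℝ)^k * (((d:ℝ)+k+1)^d * ((d:ℝ)+k+1)^(k+1)) := by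
  have hC : ((d+k+1).choose d : ℝ) * ((k:ℝ)+1) = ((d+k).choose d : ℝ) * ((d:ℝ)+k+1) := by
    have := Nat.choose_mul_succ_eq (d+k) d
    have h2 : d + k + 1 - d = k + 1 := by omega
    rw [h2] at this
    exact_mod_cast this.symm
  have haux := aux_pow k (d+k) (Nat.le_add_left k d)
  push_cast at haux
  calc ((d+k+1).choose d : ℝ) * (d:ℝ)^d * ((k:ℝ)+1)^(k+1) * (((d:ℝ)+k)^d * ((d:ℝ)+k)^k)
      = (((d+k+1).choose d : ℝ) * ((k:ℝ)+1)) * (d:ℝ)^d * (((k:ℝ)+1)^k * ((d:ℝ)+k)^(d+k)) := by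
        rw [pow_add, pow_succ]; ring
    _ = (((d+k).choose d : ℝ) * ((d:ℝ)+k+1)) * (d:ℝ)^d * (((k:ℝ)+1)^k * ((d:ℝ)+k)^(d+k)) := by
        rw [hC]
    _ ≤ (((d+k).choose d : ℝ) * ((d:ℝ)+k+1)) * (d:ℝ)^d * ((k:ℝ)^k * ((d:ℝ)+k+1)^(d+k)) := by
        apply mul_le_mul_of_nonneg_left haux (by positivity)
    _ = ((d+k).choose d : ℝ) * (d:ℝ)^d * (k:ℝ)^k * (((d:ℝ)+k+1)^d * ((d:ℝ)+k+1)^(k+1)) := by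
        rw [← pow_add, show d + (k+1) = (d+k) + 1 from by omega, pow_succ]
        ring

lemma step (d n : ℕ) (hd : 1 ≤ d) (hn : d < n) :
    ((n+1).choose d : ℝ) * ((d : ℝ) / (n+1)) ^ d * (((n : ℝ) + 1 - d) / (n+1)) ^ (n + 1 - d) ≤
      (n.choose d : ℝ) * ((d : ℝ) / n) ^ d * (((n : ℝ) - d) / n) ^ (n - d) := by
  obtain ⟨k, hk1, rfl⟩ : ∃ k, 1 ≤ k ∧ n = d + k := ⟨n - d, by omega, by omega⟩
  rw [show d + k + 1 - d = k + 1 from by omega, show d + k - d = k from by omega]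
  push_cast
  have hd0 : (0:ℝ) < d := by exact_mod_cast hd
  have hk0 : (0:ℝ) < k := by exact_mod_cast hk1
  rw [show (d:ℝ) + k + 1 - d = (k:ℝ) + 1 from by ring, show (d:ℝ) + k - d = (k:ℝ) from by ring]
  have e1 : ((d+k+1).choose d : ℝ) * ((d:ℝ)/((d:ℝ)+k+1))^d * (((k:ℝ)+1)/((d:ℝ)+k+1))^(k+1)
      = ((d+k+1).choose d : ℝ) * (d:ℝ)^d * ((k:ℝ)+1)^(k+1) / (((d:ℝ)+k+1)^d * ((d:ℝ)+k+1)^(k+1)) := by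
    have hA : ((d:ℝ)+k+1) ≠ 0 := by positivity
    have hB : ((d:ℝ)+k) ≠ 0 := by positivity
    rw [div_pow, div_pow]
    field_simp
  have e2 : ((d+k).choose d : ℝ) * ((d:ℝ)/((d:ℝ)+k))^d * ((k:ℝ)/((d:ℝ)+k))^k
      = ((d+k).choose d : ℝ) * (d:ℝ)^d * (k:ℝ)^k / (((d:ℝ)+k)^d * ((d:ℝ)+k)^k) := by
    have hA : ((d:ℝ)+k+1) ≠ 0 := by positivity
    have hB : ((d:ℝ)+k) ≠ 0 := by positivity
    rw [div_pow, div_pow]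
    field_simp
  rw [e1, e2, div_le_div_iff₀ (by positivity) (by positivity)]
  have := cleared d k hd hk1
  linarith [this]

theorem binomial_mass_at_mean_antitone (d : ℕ) (hd : 1 ≤ d) :
    ∀ m n : ℕ, d < m → m ≤ n →
      (n.choose d : ℝ) * ((d : ℝ) / n) ^ d * (((n : ℝ) - d) / n) ^ (n - d) ≤
        (m.choose d : ℝ) * ((d : ℝ) / m) ^ d * (((m : ℝ) - d) / m) ^ (m - d) := by
  intro m n hm hmn
  induction n, hmn using Nat.le_induction with
  | base => exact le_refl _
  | succ n hmn ih =>
    refine le_trans ?_ ih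
    have := step d n hd (lt_of_lt_of_le hm hmn)
    push_cast at this ⊢
    exact this
end

section
/- For a Binomial(n, p) random variable with integer mean np = m (an integer), the probability of obtaining at least m successes is at least 1/2; equivalently Σ_{k=m}^n C(n,k) (m/n)^k (1 - m/n)^(n-k) ≥ 1/2. -/
open Finset intervalIntegral Real

noncomputable def bimb (n m k : ℕ) : ℝ :=
  (n.choose k : ℝ) * ((m:ℝ)/n)^k * (1-(m:ℝ)/n)^(n-k)

/-- Key natural-number inequality for the case `2*m ≤ n`. -/
lemma bim_nat_key (n m : ℕ) (h2m : 2*m ≤ n) :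
    ∀ j, j + 1 ≤ m →
      n.choose (m-1-j) * (n-m)^(2*j+1) ≤ n.choose (m+j) * m^(2*j+1) := by
  intro j
  induction j with
  | zero =>
    intro hj
    have h := Nat.choose_succ_right_eq n (m-1)
    rw [show m - 1 + 1 = m from by omega, show n - (m-1) = (n-m)+1 from by omega] at h
    simp only [Nat.mul_zero, Nat.zero_add, Nat.add_zero, Nat.sub_zero, pow_one]
    calc n.choose (m-1) * (n-m) ≤ n.choose (m-1) * ((n-m)+1) :=
          Nat.mul_le_mul_left _ (by omega)
      _ = n.choose m * m := h.symm
  | succ j IH =>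
    intro hj
    have IH' := IH (by omega)
    have hA : n.choose (m+j+1) * (m+j+1) = n.choose (m+j) * (n-m-j) := by
      have := Nat.choose_succ_right_eq n (m+j)
      rwa [show n - (m+j) = n-m-j from by omega] at this
    have hB : n.choose (m-1-j) * (m-1-j) = n.choose (m-2-j) * (n-m+j+2) := by
      have := Nat.choose_succ_right_eq n (m-2-j)
      rwa [show m-2-j+1 = m-1-j from by omega, show n - (m-2-j) = n-m+j+2 from by omega] at this
    have hgen : ∀ r t e : ℕ, (r+t+e)^2 * (r * (r+2*t)) ≤ (r+t)^2 * ((r+e+1) * (r+2*t+e+1)) := by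
      intro r t e
      have : (r+t)^2 * ((r+e+1) * (r+2*t+e+1))
          = (r+t+e)^2 * (r * (r+2*t)) + ((r+t)^2*(2*(r+t+e)+1) + t^2*(e*(2*r+2*t+e))) := by
        ring
      omega
    have hkey : (n-m)^2 * ((m-1-j) * (m+j+1)) ≤ m^2 * ((n-m-j) * (n-m+j+2)) := by
      obtain ⟨r, hr⟩ : ∃ r, m-1-j = r := ⟨_, rfl⟩
      obtain ⟨e, he⟩ : ∃ e, n-2*m = e := ⟨_, rfl⟩
      rw [hr,
        show n-m-j = r+e+1 from by omega,
        show n-m+j+2 = r+2*(j+1)+e+1 from by omega,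
        show n-m = r+(j+1)+e from by omega,
        show m+j+1 = r+2*(j+1) from by omega,
        show m = r+(j+1) from by omega]
      exact hgen r (j+1) e
    have hpos : 0 < (m+j+1) * (n-m+j+2) := by positivity
    have main : n.choose (m-2-j) * (n-m)^(2*j+3) * ((m+j+1) * (n-m+j+2))
        ≤ n.choose (m+j+1) * m^(2*j+3) * ((m+j+1) * (n-m+j+2)) := by
      calc n.choose (m-2-j) * (n-m)^(2*j+3) * ((m+j+1) * (n-m+j+2))
          = (n.choose (m-2-j) * (n-m+j+2)) * (n-m)^(2*j+3) * (m+j+1) := by ring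
        _ = (n.choose (m-1-j) * (m-1-j)) * (n-m)^(2*j+3) * (m+j+1) := by rw [← hB]
        _ = (n.choose (m-1-j) * (n-m)^(2*j+1)) * ((n-m)^2 * ((m-1-j)*(m+j+1))) := by
              rw [show 2*j+3 = (2*j+1)+2 from by omega, pow_add]; ring
        _ ≤ (n.choose (m+j) * m^(2*j+1)) * (m^2 * ((n-m-j)*(n-m+j+2))) :=
              Nat.mul_le_mul IH' hkey
        _ = (n.choose (m+j) * (n-m-j)) * m^(2*j+3) * (n-m+j+2) := by
              rw [show 2*j+3 = (2*j+1)+2 from by omega, pow_add]; ring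
        _ = (n.choose (m+j+1) * (m+j+1)) * m^(2*j+3) * (n-m+j+2) := by rw [hA]
        _ = n.choose (m+j+1) * m^(2*j+3) * ((m+j+1) * (n-m+j+2)) := by ring
    have := Nat.le_of_mul_le_mul_right main hpos
    rwa [show m-1-(j+1) = m-2-j from by omega, show 2*(j+1)+1 = 2*j+3 from by omega,
      show m+(j+1) = m+j+1 from by omega]

lemma bimb_nonneg (n m k : ℕ) (hm : m ≤ n) : 0 ≤ bimb n m k := by
  unfold bimb
  have h1 : 0 ≤ (m:ℝ)/n := by positivity
  have h2 : (m:ℝ)/n ≤ 1 := by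
    rcases Nat.eq_zero_or_pos n with h | h
    · simp [h]
    · rw [div_le_one (by exact_mod_cast h)]; exact_mod_cast hm
  have h3 : 0 ≤ 1 - (m:ℝ)/n := by linarith
  positivity

lemma bim_total (n : ℕ) (p : ℝ) :
    ∑ k ∈ range (n+1), (n.choose k : ℝ) * p^k * (1-p)^(n-k) = 1 := by
  calc ∑ k ∈ range (n+1), (n.choose k : ℝ) * p^k * (1-p)^(n-k)
      = ∑ k ∈ range (n+1), p^k * (1-p)^(n-k) * (n.choose k : ℝ) := by
        apply Finset.sum_congr rfl; intros; ring
    _ = (p + (1-p))^n := (add_pow p (1-p) n).symm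
    _ = 1 := by norm_num

lemma bimb_eq (n m k : ℕ) (hn : 1 ≤ n) (hm : m ≤ n) (hk : k ≤ n) :
    bimb n m k = ((n.choose k * (m^k * (n-m)^(n-k)) : ℕ) : ℝ) / (n:ℝ)^n := by
  have hn0 : (n:ℝ) ≠ 0 := Nat.cast_ne_zero.mpr (by omega)
  unfold bimb
  have h1 : 1 - (m:ℝ)/n = ((n-m : ℕ):ℝ)/n := by
    rw [Nat.cast_sub hm]; field_simp
  rw [h1, div_pow, div_pow]
  push_cast
  rw [show ((n:ℝ))^n = (n:ℝ)^k * (n:ℝ)^(n-k) from by rw [← pow_add]; congr 1; omega]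
  field_simp

lemma bim_easy (n m : ℕ) (hm : 1 ≤ m) (h2 : 2*m ≤ n)
    (hkeyall : ∀ j, j + 1 ≤ m →
      n.choose (m-1-j) * (n-m)^(2*j+1) ≤ n.choose (m+j) * m^(2*j+1)) :
    (1/2:ℝ) ≤ ∑ k ∈ Icc m n, bimb n m k := by
  have hmn : m ≤ n := by omega
  have hn : 1 ≤ n := by omega
  have hb0 : ∀ k, 0 ≤ bimb n m k := fun k => bimb_nonneg n m k hmn
  have htot : ∑ k ∈ range (n+1), bimb n m k = 1 := bim_total n _
  have hsplit : ∑ k ∈ range m, bimb n m k + ∑ k ∈ Icc m n, bimb n m k = 1 := by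
    have hIcc : ∑ k ∈ Icc m n, bimb n m k = ∑ k ∈ Ico m (n+1), bimb n m k := by
      rw [Finset.Ico_add_one_right_eq_Icc]
    rw [hIcc, ← htot, Finset.range_eq_Ico, Finset.range_eq_Ico]
    exact Finset.sum_Ico_consecutive _ (Nat.zero_le m) (by omega)
  have hpair : ∀ j ∈ range m, bimb n m (m-1-j) ≤ bimb n m (m+j) := by
    intro j hj
    rw [Finset.mem_range] at hj
    have key := hkeyall j (by omega)
    have hnum : n.choose (m-1-j) * (m^(m-1-j) * (n-m)^(n-(m-1-j)))
        ≤ n.choose (m+j) * (m^(m+j) * (n-m)^(n-(m+j))) := by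
      calc n.choose (m-1-j) * (m^(m-1-j) * (n-m)^(n-(m-1-j)))
          = (n.choose (m-1-j) * (n-m)^(2*j+1)) * (m^(m-1-j) * (n-m)^(n-(m+j))) := by
            rw [show (n-m)^(n-(m-1-j)) = (n-m)^(2*j+1) * (n-m)^(n-(m+j)) from by
              rw [← pow_add]; congr 1; omega]
            ring
        _ ≤ (n.choose (m+j) * m^(2*j+1)) * (m^(m-1-j) * (n-m)^(n-(m+j))) :=
            Nat.mul_le_mul_right _ key
        _ = n.choose (m+j) * (m^(m+j) * (n-m)^(n-(m+j))) := by
            rw [show m^(m+j) = m^(2*j+1) * m^(m-1-j) from by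
              rw [← pow_add]; congr 1; omega]
            ring
    rw [bimb_eq n m _ hn hmn (by omega), bimb_eq n m _ hn hmn (by omega)]
    have hnum' : ((n.choose (m-1-j) * (m^(m-1-j) * (n-m)^(n-(m-1-j))) : ℕ) : ℝ)
        ≤ ((n.choose (m+j) * (m^(m+j) * (n-m)^(n-(m+j))) : ℕ) : ℝ) := by exact_mod_cast hnum
    gcongr
  have hL : ∑ k ∈ range m, bimb n m k ≤ ∑ k ∈ Icc m n, bimb n m k := by
    calc ∑ k ∈ range m, bimb n m k
        = ∑ j ∈ range m, bimb n m (m-1-j) :=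
          (Finset.sum_range_reflect (fun k => bimb n m k) m).symm
      _ ≤ ∑ j ∈ range m, bimb n m (m+j) := Finset.sum_le_sum hpair
      _ = ∑ k ∈ Ico m (2*m), bimb n m k := by
          rw [Finset.sum_Ico_eq_sum_range, show 2*m - m = m from by omega]
      _ ≤ ∑ k ∈ Icc m n, bimb n m k := by
          apply Finset.sum_le_sum_of_subset_of_nonneg
          · intro k hk
            simp only [Finset.mem_Ico, Finset.mem_Icc] at *
            omega
          · intro k _ _; exact hb0 k
  linarith

lemma bim_reflect (a b : ℕ) (hb : 1 ≤ b) (hba : b ≤ a) (v : ℝ) (h0 : 0 ≤ v) (hvb : v ≤ b) :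
    ((a:ℝ)+v)^a * ((b:ℝ)-v)^b ≤ ((a:ℝ)-v)^a * ((b:ℝ)+v)^b := by
  have hab : (b:ℝ) ≤ a := by exact_mod_cast hba
  have hbpos : 0 < (b:ℝ) := by exact_mod_cast hb
  rcases eq_or_lt_of_le hvb with heq | hlt
  · subst heq
    rw [sub_self, zero_pow (by omega : b ≠ 0), mul_zero]
    exact mul_nonneg (pow_nonneg (by linarith) a) (pow_nonneg (by positivity) b)
  · have h1 : 0 < (b:ℝ) - v := by linarith
    have h2 : 0 < (b:ℝ) + v := by linarith
    have h3 : 0 < (a:ℝ) - v := by linarith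
    have h4 : 0 < (a:ℝ) + v := by linarith
    set g : ℝ → ℝ := fun x => a * Real.log (a - x) + b * Real.log (b + x)
        - a * Real.log (a + x) - b * Real.log (b - x) with hg
    have hder : ∀ x ∈ Set.Icc (0:ℝ) v, HasDerivAt g
        ((a:ℝ) * ((a - x)⁻¹ * (-1)) + (b:ℝ) * ((b + x)⁻¹ * 1)
          - (a:ℝ) * ((a + x)⁻¹ * 1) - (b:ℝ) * ((b - x)⁻¹ * (-1))) x := by
      intro x hx
      obtain ⟨hx0, hxv⟩ := hx
      have d1 : 0 < (a:ℝ) - x := by linarith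
      have d2 : 0 < (b:ℝ) + x := by linarith
      have d3 : 0 < (a:ℝ) + x := by linarith
      have d4 : 0 < (b:ℝ) - x := by linarith
      have l1 : HasDerivAt (fun y : ℝ => (a:ℝ) - y) (-1) x := (hasDerivAt_id x).const_sub (a:ℝ)
      have l1' : HasDerivAt (fun y : ℝ => Real.log ((a:ℝ) - y)) (((a:ℝ) - x)⁻¹ * (-1)) x :=
        (Real.hasDerivAt_log d1.ne').comp x l1
      have l2 : HasDerivAt (fun y : ℝ => (b:ℝ) + y) 1 x := by
        simpa using (hasDerivAt_id x).const_add (b:ℝ)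
      have l2' : HasDerivAt (fun y : ℝ => Real.log ((b:ℝ) + y)) (((b:ℝ) + x)⁻¹ * 1) x :=
        (Real.hasDerivAt_log d2.ne').comp x l2
      have l3 : HasDerivAt (fun y : ℝ => (a:ℝ) + y) 1 x := by
        simpa using (hasDerivAt_id x).const_add (a:ℝ)
      have l3' : HasDerivAt (fun y : ℝ => Real.log ((a:ℝ) + y)) (((a:ℝ) + x)⁻¹ * 1) x :=
        (Real.hasDerivAt_log d3.ne').comp x l3
      have l4 : HasDerivAt (fun y : ℝ => (b:ℝ) - y) (-1) x := (hasDerivAt_id x).const_sub (b:ℝ)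
      have l4' : HasDerivAt (fun y : ℝ => Real.log ((b:ℝ) - y)) (((b:ℝ) - x)⁻¹ * (-1)) x :=
        (Real.hasDerivAt_log d4.ne').comp x l4
      exact (((l1'.const_mul (a:ℝ)).add (l2'.const_mul (b:ℝ))).sub
        (l3'.const_mul (a:ℝ))).sub (l4'.const_mul (b:ℝ))
    have mono : MonotoneOn g (Set.Icc 0 v) := by
      apply monotoneOn_of_deriv_nonneg (convex_Icc 0 v)
      · exact fun x hx => (hder x hx).continuousAt.continuousWithinAt
      · intro x hx
        rw [interior_Icc] at hx
        exact (hder x ⟨hx.1.le, hx.2.le⟩).differentiableAt.differentiableWithinAt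
      · intro x hx
        rw [interior_Icc] at hx
        obtain ⟨hx0, hxv⟩ := hx
        have d1 : 0 < (a:ℝ) - x := by linarith
        have d2 : 0 < (b:ℝ) + x := by linarith
        have d3 : 0 < (a:ℝ) + x := by linarith
        have d4 : 0 < (b:ℝ) - x := by linarith
        rw [(hder x ⟨hx0.le, hxv.le⟩).deriv]
        have expand : (a:ℝ) * ((a - x)⁻¹ * (-1)) + (b:ℝ) * ((b + x)⁻¹ * 1)
            - (a:ℝ) * ((a + x)⁻¹ * 1) - (b:ℝ) * ((b - x)⁻¹ * (-1))
            = 2*x^2*((a:ℝ)^2-(b:ℝ)^2) / ((((a:ℝ)-x)*((a:ℝ)+x)) * ((((b:ℝ)-x))*((b:ℝ)+x))) := by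
          field_simp
          ring
        rw [expand]
        apply div_nonneg
        · have : (b:ℝ)^2 ≤ (a:ℝ)^2 := by nlinarith
          nlinarith [sq_nonneg x]
        · positivity
    have hgv : 0 ≤ g v := by
      have h0v : g 0 ≤ g v := mono (Set.left_mem_Icc.2 h0) (Set.right_mem_Icc.2 h0) h0
      have : g 0 = 0 := by simp [hg]
      linarith
    have hlog : (a:ℝ) * Real.log (a + v) + (b:ℝ) * Real.log (b - v)
        ≤ (a:ℝ) * Real.log (a - v) + (b:ℝ) * Real.log (b + v) := by
      simp only [hg] at hgv; linarith
    have := Real.exp_le_exp.2 hlog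
    rwa [Real.exp_add, Real.exp_add, Real.exp_nat_mul, Real.exp_nat_mul, Real.exp_nat_mul,
      Real.exp_nat_mul, Real.exp_log h4, Real.exp_log h1, Real.exp_log h3, Real.exp_log h2]
      at this

lemma bim_hasDerivAt (n m : ℕ) (hm : 1 ≤ m) (hmn : m ≤ n) (p : ℝ) :
    HasDerivAt (fun x : ℝ => ∑ k ∈ Icc m n, (n.choose k : ℝ) * x^k * (1-x)^(n-k))
      ((m * n.choose m : ℕ) * (p^(m-1) * (1-p)^(n-m))) p := by
  classical
  set T : ℕ → ℝ := fun k => ((k * n.choose k : ℕ) : ℝ) * (p^(k-1) * (1-p)^(n-k)) with hT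
  have hterm : ∀ k ∈ Icc m n, HasDerivAt
      (fun x : ℝ => (n.choose k : ℝ) * x^k * (1-x)^(n-k)) (T k - T (k+1)) p := by
    intro k hk
    have hk2 : k ≤ n := (Finset.mem_Icc.mp hk).2
    have h1 : HasDerivAt (fun x : ℝ => x^k) ((k:ℝ)*p^(k-1)) p := by
      simpa using hasDerivAt_pow k p
    have hlin : HasDerivAt (fun x : ℝ => 1 - x) (-1) p := (hasDerivAt_id p).const_sub 1
    have h2 : HasDerivAt (fun x : ℝ => (1-x)^(n-k))
        ((((n-k : ℕ):ℝ) * (1-p)^(n-k-1)) * (-1)) p := by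
      have := (hasDerivAt_pow (n-k) (1-p)).comp p hlin
      simpa [Function.comp_def] using this
    have h3 := (h1.const_mul ((n.choose k : ℕ):ℝ)).mul h2
    have hval : T k - T (k+1) = ((n.choose k : ℝ) * ((k:ℝ)*p^(k-1))) * (1-p)^(n-k)
        + ((n.choose k : ℝ) * p^k) * ((((n-k : ℕ):ℝ) * (1-p)^(n-k-1)) * (-1)) := by
      have hid : ((k+1) * n.choose (k+1) : ℕ) = (n-k) * n.choose k := by
        rw [Nat.mul_comm (k+1), Nat.choose_succ_right_eq, Nat.mul_comm]
      simp only [hT]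
      rw [hid]
      have e1 : (k+1) - 1 = k := by omega
      have e2 : n - (k+1) = n - k - 1 := by omega
      rw [e1, e2]
      push_cast [Nat.cast_sub hk2]
      ring
    rw [hval]
    exact h3
  have hsum := HasDerivAt.fun_sum hterm
  have htel : ∑ k ∈ Icc m n, (T k - T (k+1)) = T m := by
    rw [← Finset.Ico_add_one_right_eq_Icc, Finset.sum_Ico_eq_sum_range]
    rw [show (∑ i ∈ range (n+1-m), (T (m+i) - T (m+i+1)))
        = ∑ i ∈ range (n+1-m), ((fun j => T (m+j)) i - (fun j => T (m+j)) (i+1)) from rfl]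
    rw [Finset.sum_range_sub' (fun j => T (m+j))]
    have hz : T (m + (n+1-m)) = 0 := by
      rw [show m + (n+1-m) = n+1 from by omega]
      simp [hT, Nat.choose_succ_self]
    rw [hz, sub_zero, Nat.add_zero]
  rw [htel] at hsum
  exact hsum
lemma bim_ftc (n m : ℕ) (hm : 1 ≤ m) (hmn : m ≤ n) (x y : ℝ) :
    (∑ k ∈ Icc m n, (n.choose k : ℝ) * y^k * (1-y)^(n-k))
      - (∑ k ∈ Icc m n, (n.choose k : ℝ) * x^k * (1-x)^(n-k))
    = ((m * n.choose m : ℕ) : ℝ) * ∫ t in x..y, t^(m-1) * (1-t)^(n-m) := by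
  rw [← intervalIntegral.integral_const_mul]
  exact (intervalIntegral.integral_eq_sub_of_hasDerivAt
    (fun t _ => bim_hasDerivAt n m hm hmn t)
    ((Continuous.intervalIntegrable (by continuity) x y))).symm

lemma bim_integral_reflect (a b : ℕ) (hb : 1 ≤ b) (hba : b ≤ a) :
    ∫ t in ((a:ℝ)/((a:ℝ)+(b:ℝ)))..1, (t^a * (1-t)^b)
      ≤ ∫ t in (0:ℝ)..((a:ℝ)/((a:ℝ)+(b:ℝ))), (t^a * (1-t)^b) := by
  have hb1 : (1:ℝ) ≤ (b:ℝ) := by exact_mod_cast hb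
  have ha1 : (1:ℝ) ≤ (a:ℝ) := by exact_mod_cast hb.trans hba
  have hba' : (b:ℝ) ≤ (a:ℝ) := by exact_mod_cast hba
  have hs : (0:ℝ) < (a:ℝ)+(b:ℝ) := by linarith
  have hs0 : ((a:ℝ)+(b:ℝ)) ≠ 0 := hs.ne'
  set f : ℝ → ℝ := fun t => t^a * (1-t)^b with hf
  have hcont : Continuous f := by fun_prop
  have hint : ∀ x y : ℝ, IntervalIntegrable f MeasureTheory.volume x y :=
    fun x y => hcont.intervalIntegrable x y
  have hfnn : ∀ t : ℝ, 0 ≤ t → t ≤ 1 → 0 ≤ f t := by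
    intro t h1 h2
    exact mul_nonneg (pow_nonneg h1 a) (pow_nonneg (by linarith) b)
  have hxs0 : (0:ℝ) ≤ (a:ℝ)/((a:ℝ)+(b:ℝ)) := by positivity
  have hBs0 : (0:ℝ) ≤ (b:ℝ)/((a:ℝ)+(b:ℝ)) := by positivity
  have hpt : ∀ u ∈ Set.Icc (0:ℝ) ((b:ℝ)/((a:ℝ)+(b:ℝ))),
      f ((a:ℝ)/((a:ℝ)+(b:ℝ)) + u) ≤ f ((a:ℝ)/((a:ℝ)+(b:ℝ)) - u) := by
    intro u hu
    obtain ⟨hu0, hub⟩ := hu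
    set v : ℝ := ((a:ℝ)+(b:ℝ)) * u with hv
    have h0v : 0 ≤ v := by positivity
    have hvb : v ≤ (b:ℝ) := by
      rw [hv]
      calc ((a:ℝ)+(b:ℝ)) * u ≤ ((a:ℝ)+(b:ℝ)) * ((b:ℝ)/((a:ℝ)+(b:ℝ))) :=
            mul_le_mul_of_nonneg_left hub hs.le
        _ = (b:ℝ) := by field_simp
    have hkey := bim_reflect a b hb hba v h0v hvb
    have e1 : (a:ℝ)/((a:ℝ)+(b:ℝ)) + u = ((a:ℝ)+v)/((a:ℝ)+(b:ℝ)) := by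
      rw [hv]; field_simp; try ring
    have e2 : 1 - ((a:ℝ)/((a:ℝ)+(b:ℝ)) + u) = ((b:ℝ)-v)/((a:ℝ)+(b:ℝ)) := by
      rw [hv]; field_simp; try ring
    have e3 : (a:ℝ)/((a:ℝ)+(b:ℝ)) - u = ((a:ℝ)-v)/((a:ℝ)+(b:ℝ)) := by
      rw [hv]; field_simp; try ring
    have e4 : 1 - ((a:ℝ)/((a:ℝ)+(b:ℝ)) - u) = ((b:ℝ)+v)/((a:ℝ)+(b:ℝ)) := by
      rw [hv]; field_simp; try ring
    simp only [hf]
    rw [e2, e4, e1, e3, div_pow, div_pow, div_pow, div_pow,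
      div_mul_div_comm, div_mul_div_comm]
    gcongr
  have I1 : ∫ t in ((a:ℝ)/((a:ℝ)+(b:ℝ)))..1, f t
      = ∫ u in (0:ℝ)..((b:ℝ)/((a:ℝ)+(b:ℝ))), f ((a:ℝ)/((a:ℝ)+(b:ℝ)) + u) := by
    have h := intervalIntegral.integral_comp_add_left (a := (0:ℝ))
      (b := (b:ℝ)/((a:ℝ)+(b:ℝ))) f ((a:ℝ)/((a:ℝ)+(b:ℝ)))
    rw [add_zero, show (a:ℝ)/((a:ℝ)+(b:ℝ)) + (b:ℝ)/((a:ℝ)+(b:ℝ)) = 1 from by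
      rw [← add_div, div_self hs0]] at h
    exact h.symm
  have I2 : ∫ u in (0:ℝ)..((b:ℝ)/((a:ℝ)+(b:ℝ))), f ((a:ℝ)/((a:ℝ)+(b:ℝ)) - u)
      = ∫ t in (((a:ℝ)-(b:ℝ))/((a:ℝ)+(b:ℝ)))..((a:ℝ)/((a:ℝ)+(b:ℝ))), f t := by
    have h := intervalIntegral.integral_comp_sub_left (a := (0:ℝ))
      (b := (b:ℝ)/((a:ℝ)+(b:ℝ))) f ((a:ℝ)/((a:ℝ)+(b:ℝ)))
    rw [sub_zero, div_sub_div_same] at h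
    exact h
  have I3 : ∫ u in (0:ℝ)..((b:ℝ)/((a:ℝ)+(b:ℝ))), f ((a:ℝ)/((a:ℝ)+(b:ℝ)) + u)
      ≤ ∫ u in (0:ℝ)..((b:ℝ)/((a:ℝ)+(b:ℝ))), f ((a:ℝ)/((a:ℝ)+(b:ℝ)) - u) :=
    intervalIntegral.integral_mono_on hBs0
      ((hcont.comp (by fun_prop : Continuous fun u : ℝ => (a:ℝ)/((a:ℝ)+(b:ℝ)) + u)).intervalIntegrable _ _)
      ((hcont.comp (by fun_prop : Continuous fun u : ℝ => (a:ℝ)/((a:ℝ)+(b:ℝ)) - u)).intervalIntegrable _ _)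
      hpt
  have I4 : 0 ≤ ∫ t in (0:ℝ)..(((a:ℝ)-(b:ℝ))/((a:ℝ)+(b:ℝ))), f t := by
    apply intervalIntegral.integral_nonneg (div_nonneg (by linarith) hs.le)
    intro u hu
    exact hfnn u hu.1 (le_trans hu.2 (by rw [div_le_one hs]; linarith))
  have I5 := intervalIntegral.integral_add_adjacent_intervals
    (hint 0 (((a:ℝ)-(b:ℝ))/((a:ℝ)+(b:ℝ)))) (hint (((a:ℝ)-(b:ℝ))/((a:ℝ)+(b:ℝ))) ((a:ℝ)/((a:ℝ)+(b:ℝ))))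
  linarith [I1, I2, I3, I4, I5]

lemma bim_hard (n m : ℕ) (hmn : m < n) (h2 : n + 1 ≤ 2*m) :
    (1/2:ℝ) ≤ ∑ k ∈ Icc m n, bimb n m k := by
  have hm1 : 1 ≤ m := by omega
  have hb : 1 ≤ n - m := by omega
  have hba : n - m ≤ m - 1 := by omega
  have hG1 : ∑ k ∈ Icc m n, (n.choose k : ℝ) * (1:ℝ)^k * (1-1)^(n-k) = 1 := by
    rw [Finset.sum_eq_single_of_mem n (Finset.mem_Icc.mpr ⟨hmn.le, le_refl n⟩)]
    · simp
    · intro k hk hkn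
      rw [Finset.mem_Icc] at hk
      rw [show (1:ℝ)-1 = 0 from by norm_num, zero_pow (by omega : n - k ≠ 0), mul_zero]
  have hG0 : ∑ k ∈ Icc m n, (n.choose k : ℝ) * (0:ℝ)^k * (1-0)^(n-k) = 0 := by
    apply Finset.sum_eq_zero
    intro k hk
    rw [Finset.mem_Icc] at hk
    rw [zero_pow (by omega : k ≠ 0)]
    ring
  have hn0 : (0:ℝ) < (n:ℝ) := by exact_mod_cast (by omega : 0 < n)
  have hmr : (1:ℝ) ≤ (m:ℝ) := by exact_mod_cast hm1
  have hmnr : (m:ℝ) ≤ (n:ℝ) := by exact_mod_cast hmn.le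
  have hA : ((m-1 : ℕ):ℝ) = (m:ℝ) - 1 := by
    rw [Nat.cast_sub hm1]; norm_num
  have hB : ((n-m : ℕ):ℝ) = (n:ℝ) - (m:ℝ) := Nat.cast_sub hmn.le
  have hAB : ((m-1 : ℕ):ℝ) + ((n-m : ℕ):ℝ) = (n:ℝ) - 1 := by
    rw [hA, hB]; ring
  have hn2 : (2:ℝ) ≤ (n:ℝ) := by exact_mod_cast (by omega : 2 ≤ n)
  have hABpos : (0:ℝ) < ((m-1 : ℕ):ℝ) + ((n-m : ℕ):ℝ) := by
    rw [hAB]; linarith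
  set xs : ℝ := ((m-1 : ℕ):ℝ)/(((m-1 : ℕ):ℝ) + ((n-m : ℕ):ℝ)) with hxs
  set p : ℝ := (m:ℝ)/(n:ℝ) with hp
  have hxs0 : 0 ≤ xs := by rw [hxs]; positivity
  have hp1 : p ≤ 1 := by rw [hp, div_le_one hn0]; exact hmnr
  have hxsp : xs ≤ p := by
    rw [hxs, hp, hAB, div_le_div_iff₀ (by linarith) hn0, hA]
    nlinarith
  have hrefl := bim_integral_reflect (m-1) (n-m) hb hba
  have hcont : Continuous (fun t : ℝ => t^(m-1) * (1-t)^(n-m)) := by fun_prop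
  have hint : ∀ x y : ℝ, IntervalIntegrable (fun t : ℝ => t^(m-1) * (1-t)^(n-m))
      MeasureTheory.volume x y := fun x y => hcont.intervalIntegrable x y
  have hmid : 0 ≤ ∫ t in xs..p, t^(m-1) * (1-t)^(n-m) := by
    apply intervalIntegral.integral_nonneg hxsp
    intro t ht
    have h1 : 0 ≤ t := le_trans hxs0 ht.1
    have h2 : t ≤ 1 := le_trans ht.2 hp1
    exact mul_nonneg (pow_nonneg h1 _) (pow_nonneg (by linarith) _)
  have hadj1 := intervalIntegral.integral_add_adjacent_intervals (hint xs p) (hint p 1)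
  have hadj2 := intervalIntegral.integral_add_adjacent_intervals (hint 0 xs) (hint xs p)
  have hchain : ∫ t in p..1, t^(m-1) * (1-t)^(n-m) ≤ ∫ t in (0:ℝ)..p, t^(m-1) * (1-t)^(n-m) := by
    linarith [hrefl]
  have hftc1 := bim_ftc n m hm1 hmn.le p 1
  have hftc0 := bim_ftc n m hm1 hmn.le 0 p
  have hc : (0:ℝ) ≤ ((m * n.choose m : ℕ) : ℝ) := Nat.cast_nonneg _
  have hmul : ((m * n.choose m : ℕ) : ℝ) * ∫ t in p..1, t^(m-1) * (1-t)^(n-m)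
      ≤ ((m * n.choose m : ℕ) : ℝ) * ∫ t in (0:ℝ)..p, t^(m-1) * (1-t)^(n-m) :=
    mul_le_mul_of_nonneg_left hchain hc
  show (1/2:ℝ) ≤ ∑ k ∈ Icc m n, (n.choose k : ℝ) * p^k * (1-p)^(n-k)
  linarith [hftc1, hftc0, hG1, hG0, hmul]

theorem binomial_integer_mean_median (n m : ℕ) (hn : 1 ≤ n) (hm : m ≤ n) :
    (1 / 2 : ℝ) ≤ ∑ k ∈ Finset.Icc m n,
      (n.choose k : ℝ) * ((m : ℝ) / n) ^ k * (1 - (m : ℝ) / n) ^ (n - k) := by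
  show (1/2:ℝ) ≤ ∑ k ∈ Finset.Icc m n, bimb n m k
  rcases eq_or_lt_of_le hm with heq | hlt
  · subst heq
    rw [Finset.Icc_self, Finset.sum_singleton]
    have hdd : (m:ℝ)/(m:ℝ) = 1 := div_self (by exact_mod_cast (by omega : m ≠ 0))
    simp [bimb, hdd]
    norm_num
  · rcases Nat.eq_zero_or_pos m with rfl | hm1
    · have htot : ∑ k ∈ Finset.Icc 0 n, bimb n 0 k = 1 := by
        rw [show Finset.Icc 0 n = Finset.range (n+1) from by
          rw [Finset.range_eq_Ico, Finset.Ico_add_one_right_eq_Icc]]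
        simpa only [bimb, Nat.cast_zero, zero_div] using bim_total n 0
      rw [htot]; norm_num
    · by_cases h2 : 2*m ≤ n
      · exact bim_easy n m hm1 h2 (bim_nat_key n m h2)
      · exact bim_hard n m hlt (by omega)
end

section
/- For integers n ≥ 2 and 1 ≤ d ≤ n-1, the tail probability α† = Σ_{k=d+1}^n C(n,k)·(d/n)^k·((n-d)/n)^(n-k) satisfies α† ≥ 1/4. -/
open Finset

-- ℕ cast identities
private lemma cast_id1 {n k : ℕ} (hk1 : 1 ≤ k) (hn1 : 1 ≤ n) :
    (n.choose k : ℝ) * (k : ℝ) = (n : ℝ) * ((n-1).choose (k-1) : ℝ) := by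
  have h : n * ((n-1).choose (k-1)) = n.choose k * k := by
    obtain ⟨m, rfl⟩ : ∃ m, n = m + 1 := ⟨n-1, by omega⟩
    obtain ⟨j, rfl⟩ : ∃ j, k = j + 1 := ⟨k-1, by omega⟩
    simpa using (Nat.add_one_mul_choose_eq m j)
  exact_mod_cast h.symm

private lemma cast_id2 {n k : ℕ} (hn1 : 1 ≤ n) :
    (n.choose k : ℝ) * ((n - k : ℕ) : ℝ) = (n : ℝ) * ((n-1).choose k : ℝ) := by
  have h : n * ((n-1).choose k) = n.choose k * (n - k) := by
    obtain ⟨m, rfl⟩ : ∃ m, n = m + 1 := ⟨n-1, by omega⟩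
    simp only [Nat.add_sub_cancel]
    calc (m+1) * m.choose k = (m+1).choose (k+1) * (k+1) := Nat.add_one_mul_choose_eq m k
    _ = (m+1).choose k * (m+1-k) := Nat.choose_succ_right_eq (m+1) k
  exact_mod_cast h.symm

-- derivative of the tail sum
private lemma hasDerivAt_tail (n d : ℕ) (hd : 1 ≤ d) (hdn : d + 1 ≤ n) (x : ℝ) :
    HasDerivAt (fun y : ℝ => ∑ k ∈ Icc (d+1) n, (n.choose k : ℝ) * y^k * (1-y)^(n-k))
      ((n : ℝ) * (((n-1).choose d : ℕ) : ℝ) * x^d * (1-x)^(n-1-d)) x := by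
  classical
  set v : ℕ → ℝ := fun k => (n : ℝ) * (((n-1).choose (k-1) : ℕ) : ℝ) * x^(k-1) * (1-x)^(n-k) with hv
  have hterm : ∀ k ∈ Icc (d+1) n,
      HasDerivAt (fun y : ℝ => (n.choose k : ℝ) * y^k * (1-y)^(n-k)) (v k - v (k+1)) x := by
    intro k hk
    simp only [mem_Icc] at hk
    have h2 : HasDerivAt (fun y : ℝ => (1-y)^(n-k)) (-(((n-k : ℕ) : ℝ) * (1-x)^(n-k-1))) x := by
      have := (hasDerivAt_pow (n-k) (1-x)).comp x ((hasDerivAt_id x).const_sub 1)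
      simpa [Function.comp_def] using this
    have h1 : HasDerivAt (fun y : ℝ => (n.choose k : ℝ) * y^k) ((n.choose k : ℝ) * ((k:ℝ) * x^(k-1))) x :=
      (hasDerivAt_pow k x).const_mul _
    have h3 := h1.mul h2
    convert h3 using 1
    · rfl
    · rfl
    · rfl
    have e1 : (n.choose k : ℝ) * ((k:ℝ) * x^(k-1)) * (1-x)^(n-k)
        = v k := by
      rw [hv]; dsimp only
      rw [show (n.choose k : ℝ) * ((k:ℝ) * x^(k-1)) = ((n.choose k : ℝ) * (k:ℝ)) * x^(k-1) from by ring,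
        cast_id1 (by omega) (by omega)]
    have e2 : (n.choose k : ℝ) * x^k * (-(((n-k : ℕ) : ℝ) * (1-x)^(n-k-1))) = - v (k+1) := by
      rw [hv]; dsimp only
      rw [show k+1-1 = k from rfl, show n-(k+1) = n-k-1 from by omega]
      rw [show (n.choose k : ℝ) * x^k * (-(((n-k : ℕ) : ℝ) * (1-x)^(n-k-1)))
        = -(((n.choose k : ℝ) * ((n-k : ℕ) : ℝ)) * (x^k * (1-x)^(n-k-1))) from by ring,
        cast_id2 (by omega)]
      ring
    linarith [e1, e2]
  have hsum := HasDerivAt.sum hterm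
  convert hsum using 1
  · rfl
  · rfl
  · ext y; simp [Finset.sum_apply]
  have tele : ∑ i ∈ Icc (d+1) n, (v i - v (i+1)) = v (d+1) - v (n+1) := by
    rw [← Finset.Ico_add_one_right_eq_Icc, Finset.sum_Ico_eq_sum_range]
    have hc : ∀ k ∈ Finset.range (n+1-(d+1)), v (d+1+k) - v (d+1+k+1)
        = (fun i => v (d+1+i)) k - (fun i => v (d+1+i)) (k+1) := by
      intro k _; simp [← add_assoc]
    rw [Finset.sum_congr rfl hc, Finset.sum_range_sub' (fun i => v (d+1+i))]
    have h1 : d+1+0 = d+1 := by omega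
    have h2 : d+1+(n+1-(d+1)) = n+1 := by omega
    rw [h1, h2]
  rw [tele]
  have hvn : v (n+1) = 0 := by
    rw [hv]; dsimp only
    rw [show n+1-1 = n from rfl]
    rw [Nat.choose_eq_zero_of_lt (by omega)]
    simp
  rw [hvn, sub_zero, hv]
  dsimp only
  rw [show d+1-1 = d from rfl, show n-(d+1) = n-1-d from by omega]

-- derivative of the single term
private lemma hasDerivAt_w (n d : ℕ) (x : ℝ) :
    HasDerivAt (fun y : ℝ => (n.choose d : ℝ) * y^d * (1-y)^(n-d))
      ((n.choose d : ℝ) * ((d:ℝ) * x^(d-1)) * (1-x)^(n-d)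
        + (n.choose d : ℝ) * x^d * (-(((n-d : ℕ) : ℝ) * (1-x)^(n-d-1)))) x := by
  have h2 : HasDerivAt (fun y : ℝ => (1-y)^(n-d)) (-(((n-d : ℕ) : ℝ) * (1-x)^(n-d-1))) x := by
    have := (hasDerivAt_pow (n-d) (1-x)).comp x ((hasDerivAt_id x).const_sub 1)
    simpa [Function.comp_def] using this
  exact ((hasDerivAt_pow d x).const_mul _).mul h2


-- the interpolation function and its derivative
private lemma hasDerivAt_h (n d : ℕ) (hd : 1 ≤ d) (hdn : d + 1 ≤ n) (θ : ℝ) :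
    HasDerivAt (fun t : ℝ =>
      (∑ k ∈ Icc (d+1) n, (n.choose k : ℝ) * (((d:ℝ)-t)/n)^k * (1-((d:ℝ)-t)/n)^(n-k))
        + t * ((n.choose d : ℝ) * (((d:ℝ)-t)/n)^d * (1-((d:ℝ)-t)/n)^(n-d)))
      ((n.choose d : ℝ)/n * θ * ((((d:ℝ)-θ)/n) - θ) * (((d:ℝ)-θ)/n)^(d-1)
        * (1-((d:ℝ)-θ)/n)^(n-d-1)) θ := by
  have hn0 : (n:ℝ) ≠ 0 := Nat.cast_ne_zero.mpr (by omega)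
  have haff : HasDerivAt (fun t : ℝ => ((d:ℝ)-t)/n) (-1/n) θ := by
    have := ((hasDerivAt_id θ).const_sub (d:ℝ)).div_const (n:ℝ)
    simpa using this
  have hg := (hasDerivAt_tail n d hd hdn (((d:ℝ)-θ)/n)).comp θ haff
  have hw := (hasDerivAt_w n d (((d:ℝ)-θ)/n)).comp θ haff
  simp only [Function.comp_def] at hg hw
  have htot := hg.add ((hasDerivAt_id θ).mul hw)
  convert htot using 1
  · rfl
  · rfl
  · rfl
  obtain ⟨e, rfl⟩ : ∃ e, d = e+1 := ⟨d-1, by omega⟩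
  obtain ⟨m, rfl⟩ : ∃ m, n = e+1+m+1 := ⟨n-e-2, by omega⟩
  rw [show e+1+m+1-1-(e+1) = m from by omega,
      show e+1+m+1-(e+1)-1 = m from by omega,
      show e+1+m+1-(e+1) = m+1 from by omega,
      show e+1-1 = e from by omega,
      show e+1+m+1-1 = e+1+m from by omega]
  have hcc0 := cast_id2 (n := e+1+m+1) (k := e+1) (by omega)
  rw [show e+1+m+1-1 = e+1+m from by omega,
      show e+1+m+1-(e+1) = m+1 from by omega] at hcc0
  have hne : ((e+1+m+1 : ℕ) : ℝ) ≠ 0 := Nat.cast_ne_zero.mpr (by omega)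
  have hcc : (((e+1+m).choose (e+1) : ℕ) : ℝ)
      = ((e+1+m+1).choose (e+1) : ℝ) * (((m+1 : ℕ)) : ℝ) / ((e+1+m+1 : ℕ) : ℝ) := by
    field_simp
    push_cast at hcc0 ⊢
    linarith [hcc0]
  rw [hcc]
  generalize hX : ((((e+1 : ℕ)) : ℝ) - θ) / (((e+1+m+1 : ℕ)) : ℝ) = X
  have hθ : θ = (((e+1 : ℕ)) : ℝ) - (((e+1+m+1 : ℕ)) : ℝ) * X := by
    push_cast
    field_simp at hX
    push_cast at hX
    linarith
  rw [hθ, pow_succ X e, pow_succ (1-X) m]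
  simp only [id]
  push_cast
  field_simp
  ring

private lemma pascal_split (n d : ℕ) (hd : 1 ≤ d) (hdn : d + 1 ≤ n) (y : ℝ) :
    ∑ k ∈ Icc (d+1) (n+1), (((n+1).choose k : ℕ) : ℝ) * y^k * (1-y)^(n+1-k)
      = (∑ k ∈ Icc (d+1) n, (n.choose k : ℝ) * y^k * (1-y)^(n-k))
        + y * ((n.choose d : ℝ) * y^d * (1-y)^(n-d)) := by
  classical
  have hmap : Finset.Icc (d+1) (n+1) = Finset.map (addRightEmbedding 1) (Finset.Icc d n) := by
    rw [Finset.map_add_right_Icc]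
  rw [hmap, Finset.sum_map]
  have hterm : ∀ j ∈ Icc d n,
      (((n+1).choose (addRightEmbedding 1 j) : ℕ) : ℝ) * y^(addRightEmbedding 1 j)
          * (1-y)^(n+1-(addRightEmbedding 1 j))
      = ((n.choose j : ℝ) * y^(j+1) * (1-y)^(n-j))
        + ((n.choose (j+1) : ℝ) * y^(j+1) * (1-y)^(n+1-(j+1))) := by
    intro j hj
    simp only [addRightEmbedding_apply]
    rw [show n+1-(j+1) = n-j from by omega, Nat.choose_succ_succ]
    push_cast
    simp only [Nat.succ_eq_add_one]
    ring
  rw [Finset.sum_congr rfl hterm, Finset.sum_add_distrib]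
  -- first sum: split off j = d
  have hsplit1 : Finset.Icc d n = insert d (Finset.Icc (d+1) n) := by
    rw [Finset.Icc_add_one_left_eq_Ioc, Finset.Ioc_insert_left (by omega : d ≤ n)]
  have hS1 : ∑ j ∈ Icc d n, (n.choose j : ℝ) * y^(j+1) * (1-y)^(n-j)
      = y * ((n.choose d : ℝ) * y^d * (1-y)^(n-d))
        + y * ∑ k ∈ Icc (d+1) n, (n.choose k : ℝ) * y^k * (1-y)^(n-k) := by
    rw [hsplit1, Finset.sum_insert (by simp), Finset.mul_sum]
    congr 1
    · rw [pow_succ]; ring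
    · exact Finset.sum_congr rfl (fun k hk => by rw [pow_succ]; ring)
  -- second sum: reindex back and drop the zero top term
  have hS2 : ∑ j ∈ Icc d n, (n.choose (j+1) : ℝ) * y^(j+1) * (1-y)^(n+1-(j+1))
      = (1-y) * ∑ k ∈ Icc (d+1) n, (n.choose k : ℝ) * y^k * (1-y)^(n-k) := by
    have : ∑ j ∈ Icc d n, (n.choose (j+1) : ℝ) * y^(j+1) * (1-y)^(n+1-(j+1))
        = ∑ k ∈ Icc (d+1) (n+1), (n.choose k : ℝ) * y^k * (1-y)^(n+1-k) := by
      rw [hmap, Finset.sum_map]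
      exact Finset.sum_congr rfl (fun j hj => by simp only [addRightEmbedding_apply])
    rw [this]
    have htop : insert (n+1) (Finset.Icc (d+1) n) = Finset.Icc (d+1) (n+1) := by
      rw [← Finset.Ico_add_one_right_eq_Icc (d+1) n]
      exact Finset.Ico_insert_right (by omega)
    rw [← htop, Finset.sum_insert (by simp), Nat.choose_eq_zero_of_lt (by omega)]
    rw [Finset.mul_sum]
    simp only [Nat.cast_zero, zero_mul, zero_add]
    refine Finset.sum_congr rfl (fun k hk => ?_)
    simp only [mem_Icc] at hk
    rw [show n+1-k = (n-k)+1 from by omega, pow_succ]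
    ring
  rw [hS1, hS2]
  ring

private lemma step_mono (n d : ℕ) (hd : 1 ≤ d) (hdn : d + 1 ≤ n) :
    (∑ k ∈ Icc (d+1) n, (n.choose k : ℝ) * ((d:ℝ)/n)^k * (((n:ℝ)-d)/n)^(n-k))
      ≤ ∑ k ∈ Icc (d+1) (n+1), (((n+1).choose k : ℕ) : ℝ) * ((d:ℝ)/(((n+1:ℕ)):ℝ))^k
          * (((((n+1:ℕ)):ℝ)-d)/(((n+1:ℕ)):ℝ))^(n+1-k) := by
  have hn0 : (0:ℝ) < (n:ℝ) := by
    have : 0 < n := by omega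
    exact_mod_cast this
  have hn0' : (n:ℝ) ≠ 0 := ne_of_gt hn0
  have hn1 : (0:ℝ) < (n:ℝ)+1 := by linarith
  have hd0 : (1:ℝ) ≤ (d:ℝ) := by exact_mod_cast hd
  have hdn' : (d:ℝ) ≤ (n:ℝ) := by exact_mod_cast (by omega : d ≤ n)
  set H : ℝ → ℝ := fun t =>
      (∑ k ∈ Icc (d+1) n, (n.choose k : ℝ) * (((d:ℝ)-t)/n)^k * (1-((d:ℝ)-t)/n)^(n-k))
        + t * ((n.choose d : ℝ) * (((d:ℝ)-t)/n)^d * (1-((d:ℝ)-t)/n)^(n-d)) with hH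
  have hderiv : ∀ t : ℝ, HasDerivAt H
      ((n.choose d : ℝ)/n * t * ((((d:ℝ)-t)/n) - t) * (((d:ℝ)-t)/n)^(d-1)
        * (1-((d:ℝ)-t)/n)^(n-d-1)) t := fun t => hasDerivAt_h n d hd hdn t
  have hmono : MonotoneOn H (Set.Icc 0 ((d:ℝ)/((n:ℝ)+1))) := by
    apply monotoneOn_of_deriv_nonneg (convex_Icc _ _)
    · exact fun t _ => ((hderiv t).continuousAt).continuousWithinAt
    · exact fun t _ => ((hderiv t).differentiableAt).differentiableWithinAt
    · intro t ht
      rw [interior_Icc] at ht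
      rw [(hderiv t).deriv]
      have ht0 : 0 < t := ht.1
      have ht1 : t * ((n:ℝ)+1) < d := (lt_div_iff₀ hn1).mp ht.2
      have htd : t ≤ (d:ℝ) := by nlinarith
      have hXt : t ≤ ((d:ℝ)-t)/n := by rw [le_div_iff₀ hn0]; nlinarith
      have hX0 : 0 ≤ ((d:ℝ)-t)/n := by
        apply div_nonneg _ (le_of_lt hn0); linarith
      have hX1 : ((d:ℝ)-t)/n ≤ 1 := by
        rw [div_le_one hn0]; linarith
      have c1 : (0:ℝ) ≤ (n.choose d : ℝ)/n * t := by positivity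
      have c2 : (0:ℝ) ≤ (((d:ℝ)-t)/n) - t := by linarith
      have c3 : (0:ℝ) ≤ (((d:ℝ)-t)/n)^(d-1) := pow_nonneg hX0 _
      have c4 : (0:ℝ) ≤ (1-((d:ℝ)-t)/n)^(n-d-1) := pow_nonneg (by linarith) _
      exact mul_nonneg (mul_nonneg (mul_nonneg c1 c2) c3) c4
  have hθ0 : (0:ℝ) ≤ (d:ℝ)/((n:ℝ)+1) := by positivity
  have hcomp := hmono (Set.mem_Icc.mpr ⟨le_refl 0, hθ0⟩)
      (Set.mem_Icc.mpr ⟨hθ0, le_refl _⟩) hθ0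
  -- identify H 0 with the LHS
  have hend0 : H 0 = ∑ k ∈ Icc (d+1) n, (n.choose k : ℝ) * ((d:ℝ)/n)^k * (((n:ℝ)-d)/n)^(n-k) := by
    rw [hH]
    dsimp only
    rw [zero_mul, add_zero]
    refine Finset.sum_congr rfl (fun k hk => ?_)
    rw [show ((d:ℝ)-0)/n = (d:ℝ)/n from by ring,
      show (1:ℝ)-(d:ℝ)/n = ((n:ℝ)-d)/n from by field_simp]
  -- identify H (d/(n+1)) with the RHS
  have hXstar : ((d:ℝ) - (d:ℝ)/((n:ℝ)+1))/n = (d:ℝ)/((n:ℝ)+1) := by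
    field_simp
    ring
  have hend1 : H ((d:ℝ)/((n:ℝ)+1))
      = ∑ k ∈ Icc (d+1) (n+1), (((n+1).choose k : ℕ) : ℝ) * ((d:ℝ)/(((n+1:ℕ)):ℝ))^k
          * (((((n+1:ℕ)):ℝ)-d)/(((n+1:ℕ)):ℝ))^(n+1-k) := by
    rw [hH]
    dsimp only
    rw [hXstar, ← pascal_split n d hd hdn ((d:ℝ)/((n:ℝ)+1))]
    refine Finset.sum_congr rfl (fun k hk => ?_)
    have e1 : (((n+1:ℕ)):ℝ) = (n:ℝ)+1 := by push_cast; ring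
    rw [e1, show ((((n:ℝ)+1))-(d:ℝ))/((n:ℝ)+1) = 1-(d:ℝ)/((n:ℝ)+1) from by field_simp]
  rw [hend0, hend1] at hcomp
  exact hcomp

private lemma base_mono (d : ℕ) (hd : 1 ≤ d) :
    ((d:ℝ)/((d:ℝ)+1))^(d+1) ≤ (((d:ℝ)+1)/((d:ℝ)+2))^(d+2) := by
  have hx : (1:ℝ) ≤ (d:ℝ) := by exact_mod_cast hd
  set x := (d:ℝ) with hxdef
  have hx0 : (0:ℝ) < x := by linarith
  have h1 : (0:ℝ) < x+1 := by linarith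
  have h2 : (0:ℝ) < x+2 := by linarith
  have hu : (0:ℝ) < x*(x+2) := by positivity
  -- Bernoulli
  have hbern : 1 + (((d+1 : ℕ)):ℝ) * (1/(x*(x+2))) ≤ (1 + 1/(x*(x+2)))^(d+1) :=
    one_add_mul_le_pow (le_trans (by norm_num : (-2:ℝ) ≤ 0) (by positivity)) (d+1)
  have hcast : (((d+1 : ℕ)):ℝ) = x+1 := by rw [hxdef]; push_cast; ring
  rw [hcast] at hbern
  have hA : (0:ℝ) < (x*(x+2))^d := by positivity
  have hprod : (x*(x+2))^(d+1) * (1 + 1/(x*(x+2)))^(d+1) = ((x+1)^2)^(d+1) := by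
    rw [← mul_pow]
    congr 1
    field_simp
    ring
  have key1 : (x*(x+2))^(d+1) * (1 + (x+1) * (1/(x*(x+2)))) ≤ ((x+1)^2)^(d+1) := by
    rw [← hprod]
    apply mul_le_mul_of_nonneg_left hbern (by positivity)
  have hsimp : (x*(x+2))^(d+1) * (1 + (x+1) * (1/(x*(x+2))))
      = (x*(x+2))^d * (x*(x+2)) + (x+1) * (x*(x+2))^d := by
    rw [pow_succ]
    field_simp
  rw [hsimp] at key1
  -- reduce the goal to polynomial inequality
  rw [div_pow, div_pow, div_le_div_iff₀ (by positivity) (by positivity)]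
  have e1 : ((x+1)^2)^(d+1) * (x+1) = (x+1)^(d+2) * (x+1)^(d+1) := by
    rw [← pow_mul, ← pow_succ, ← pow_add]
    congr 1
    omega
  have e2 : x^(d+1) * (x+2)^(d+2) = ((x*(x+2))^d * (x*(x+2))) * (x+2) := by
    rw [mul_pow, pow_succ, pow_succ, pow_succ]
    ring
  rw [← e1, e2]
  have final : ((x*(x+2))^d * (x*(x+2)) + (x+1) * (x*(x+2))^d) * (x+1)
      ≥ ((x*(x+2))^d * (x*(x+2))) * (x+2) := by nlinarith [hA]
  nlinarith [mul_le_mul_of_nonneg_right key1 (le_of_lt h1), final]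

private lemma quarter_le_base : ∀ d : ℕ, 1 ≤ d → (1/4 : ℝ) ≤ ((d:ℝ)/((d:ℝ)+1))^(d+1) := by
  intro d hd
  induction d with
  | zero => omega
  | succ e ih =>
    rcases Nat.eq_or_lt_of_le hd with h | h
    · rw [← h]
      norm_num
    · have he : 1 ≤ e := by omega
      have := base_mono e he
      have hc : ((e+1 : ℕ):ℝ) = (e:ℝ)+1 := by push_cast; ring
      calc (1/4:ℝ) ≤ ((e:ℝ)/((e:ℝ)+1))^(e+1) := ih he
        _ ≤ (((e:ℝ)+1)/((e:ℝ)+2))^(e+2) := this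
        _ = (((e+1:ℕ):ℝ)/(((e+1:ℕ):ℝ)+1))^(e+1+1) := by
            rw [hc, show (e:ℝ)+1+1 = (e:ℝ)+2 from by ring, show e+1+1 = e+2 from by omega]

theorem alpha_dagger_ge_quarter (n d : ℕ) (hn : 2 ≤ n) (hd : 1 ≤ d) (hdn : d ≤ n - 1) :
    (1 / 4 : ℝ) ≤ ∑ k ∈ Finset.Icc (d + 1) n,
      (n.choose k : ℝ) * ((d : ℝ) / n) ^ k * (((n : ℝ) - d) / n) ^ (n - k) := by
  have hdn' : d + 1 ≤ n := by omega
  have main : ∀ m : ℕ, d + 1 ≤ m → (1/4:ℝ) ≤ ∑ k ∈ Finset.Icc (d+1) m,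
      (m.choose k : ℝ) * ((d:ℝ)/m)^k * (((m:ℝ)-d)/m)^(m-k) := by
    intro m hm
    induction m, hm using Nat.le_induction with
    | base =>
      rw [Finset.Icc_self, Finset.sum_singleton, Nat.choose_self, Nat.sub_self, pow_zero,
        Nat.cast_one, one_mul, mul_one]
      have hc : ((d+1:ℕ):ℝ) = (d:ℝ)+1 := by push_cast; ring
      rw [hc]
      exact quarter_le_base d hd
    | succ m hm ih => exact le_trans ih (step_mono m d hd hm)
  exact main n hdn'
end
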